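/- arXiv:2104.05701 — 4 statements merged into one kernel-verified Lean document; each statement's English description precedes it below -/
import Mathlib

section
/- For each n-cycle permutation f̄ in S_n, there exists a unique bijection f: ℤ → ℤ satisfying f(i+n) = f(i)+n for all i, i < f(i) < i+n for all i, and f(i) ≡ f̄(i) (mod n) for all 1 ≤ i ≤ n. -/
open Finset

/-- `f : ℤ → ℤ` is an `n`-periodic affine permutation. -/
def IsAffinePerm (n : ℕ) (f : ℤ → ℤ) : Prop :=
  Function.Bijective f ∧ ∀ i : ℤ, f (i + (n : ℤ)) = f i + (n : ℤ)

/-- Boundedness condition `i ≤ f i ≤ i + n`. -/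
def IsBoundedFn (n : ℕ) (f : ℤ → ℤ) : Prop :=
  ∀ i : ℤ, i ≤ f i ∧ f i ≤ i + (n : ℤ)

/-- Bounded affine permutation. -/
def IsBAP (n : ℕ) (f : ℤ → ℤ) : Prop := IsAffinePerm n f ∧ IsBoundedFn n f

/-- The orbit of the residue of `a` under the reduction of `f` modulo `n`. -/
def orbitF (n : ℕ) (f : ℤ → ℤ) (a : ℤ) : Finset ℤ :=
  (Finset.range n).image (fun r => (f^[r] a) % (n : ℤ))

/-- The reduction of `f` modulo `n` is an `n`-cycle. -/
def IsCycleMod (n : ℕ) (f : ℤ → ℤ) : Prop :=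
  ∀ j : ℤ, ∃ r : ℕ, r < n ∧ (f^[r] 0) % (n : ℤ) = j % (n : ℤ)

/-- The winding number `k(f̄) = #{i ∈ [1,n] : f̄(i) < i} = #{i ∈ [1,n] : f(i) > n}`. -/
noncomputable def winding (n : ℕ) (f : ℤ → ℤ) : ℕ :=
  ((Finset.Icc (1 : ℤ) (n : ℤ)).filter (fun i => (n : ℤ) < f i)).card

/-- `f ∈ Θ_{k,n}`: a bounded affine permutation whose reduction modulo `n`
is an `n`-cycle with winding number `k`. -/
def IsTheta (k n : ℕ) (f : ℤ → ℤ) : Prop :=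
  IsBAP n f ∧ IsCycleMod n f ∧ winding n f = k

/-- Inversions of `f`: pairs `i < j` with `f(i) > f(j)` and `i ∈ [n]`
(for a bounded affine permutation all inversions lie in the indicated box). -/
noncomputable def inversions (n : ℕ) (f : ℤ → ℤ) : Finset (ℤ × ℤ) :=
  ((Finset.Icc (1 : ℤ) (n : ℤ)) ×ˢ (Finset.Icc (1 : ℤ) (3 * (n : ℤ)))).filter
    (fun p => p.1 < p.2 ∧ f p.2 < f p.1)

/-- The length `ℓ(f)`, i.e. the number of inversions. -/
noncomputable def alen (n : ℕ) (f : ℤ → ℤ) : ℕ := (inversions n f).card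

/-- The number of cycles of the reduction of `f` modulo `n`. -/
def numCycles (n : ℕ) (f : ℤ → ℤ) : ℕ :=
  ((Finset.range n).image (fun a : ℕ => orbitF n f (a : ℤ))).card

/-- The affine simple transposition `s_i`, swapping `i + rn` and `i + 1 + rn` for all `r`. -/
def sT (n : ℕ) (i : ℤ) (j : ℤ) : ℤ :=
  if j % (n : ℤ) = i % (n : ℤ) then j + 1
  else if j % (n : ℤ) = (i + 1) % (n : ℤ) then j - 1
  else j

/-- `s_i f`. -/
def mulS (n : ℕ) (i : ℤ) (f : ℤ → ℤ) : ℤ → ℤ := fun m => sT n i (f m)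

/-- `f s_i`. -/
def smulS (n : ℕ) (i : ℤ) (f : ℤ → ℤ) : ℤ → ℤ := fun m => f (sT n i m)

/-- `s_i f s_i`. -/
def conjS (n : ℕ) (i : ℤ) (f : ℤ → ℤ) : ℤ → ℤ := fun m => sT n i (f (sT n i m))

/-- The cyclic shift `σ`. -/
def cshift (f : ℤ → ℤ) : ℤ → ℤ := fun i => f (i - 1) + 1

/-- Resolving the crossing `(i,j)`: swap the values `f(i)` and `f(j)` `n`-periodically. -/
def resolve (n : ℕ) (f : ℤ → ℤ) (i j : ℤ) : ℤ → ℤ := fun m =>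
  if m % (n : ℤ) = i % (n : ℤ) then f j + (m - i)
  else if m % (n : ℤ) = j % (n : ℤ) then f i + (m - j)
  else f m

/-- `g'` is the order-preserving relabeling (by `ℤ`, `n'`-periodically) of the
restriction of `g` to the set `S` of integers. -/
def IsRelabelOn (n : ℕ) (g : ℤ → ℤ) (S : Set ℤ) (n' : ℕ) (g' : ℤ → ℤ) : Prop :=
  ∃ φ : ℤ → ℤ, StrictMono φ ∧ (∀ m : ℤ, φ (m + (n' : ℤ)) = φ m + (n : ℤ)) ∧
    Set.range φ = S ∧ ∀ m : ℤ, g (φ m) = φ (g' m)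

/-- The parameters `(k₁, n₁)` of the cycle of `g` through `a`:
`n₁` is the size of the orbit of the residue of `a`, and `k₁` is the winding number of the
permutation obtained by order-preserving relabeling of the restriction of `g`
to the integers whose residue lies in that orbit. -/
noncomputable def resParamsAt (n : ℕ) (g : ℤ → ℤ) (a : ℤ) : ℕ × ℕ :=
  (sInf {k₁ : ℕ | ∃ g₁ : ℤ → ℤ,
      IsRelabelOn n g {m : ℤ | m % (n : ℤ) ∈ orbitF n g a} (orbitF n g a).card g₁ ∧
      winding (orbitF n g a).card g₁ = k₁},
   (orbitF n g a).card)

/-- The inversion multiset `F'(f)`: one point `(k₁, n₁)` for each inversion `(i,j)`,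
recording the parameters of the cycle through `i` after resolving the crossing. -/
noncomputable def invMultiset (n : ℕ) (f : ℤ → ℤ) : Multiset (ℕ × ℕ) :=
  Multiset.map (fun p => resParamsAt n (resolve n f p.1 p.2) p.1) (inversions n f).val

/-- The inversion multiset `F(f)` in `(k, n-k)`-coordinates: points `(k₁, n₁ - k₁)`. -/
noncomputable def invMultisetF (n : ℕ) (f : ℤ → ℤ) : Multiset (ℕ × ℕ) :=
  Multiset.map (fun p => (p.1, p.2 - p.1)) (invMultiset n f)

/-- `f` is repetition-free if its inversion multiset has no repeated elements. -/
def RepFree (n : ℕ) (f : ℤ → ℤ) : Prop := (invMultiset n f).Nodup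

/-- A double crossing at `i`: with `a = f⁻¹(i+1)`, `b = f⁻¹(i)`, `c = f(i+1)`, `d = f(i)`,
we have `a < b < i < i+1 < c < d`. -/
def DoubleCrossingAt (n : ℕ) (f : ℤ → ℤ) (i : ℤ) : Prop :=
  ∃ a b : ℤ, f a = i + 1 ∧ f b = i ∧ a < b ∧ b < i ∧ i + 1 < f (i + 1) ∧ f (i + 1) < f i

/-- `i` and `j` lie in the same cycle of the reduction of `f` modulo `n`. -/
def SameCycleMod (n : ℕ) (f : ℤ → ℤ) (i j : ℤ) : Prop :=
  j % (n : ℤ) ∈ orbitF n f i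

/-- The recurrence defining the positroid Catalan numbers `C_f`. -/
structure CatalanRules (C : (n : ℕ) → (ℤ → ℤ) → ℕ) : Prop where
  base : ∀ f : ℤ → ℤ, IsBAP 1 f → C 1 f = 1
  fix_removal : ∀ (n n' : ℕ) (f f' : ℤ → ℤ), IsBAP n f → IsBAP n' f' →
    IsRelabelOn n f {m : ℤ | f m ≠ m ∧ f m ≠ m + (n : ℤ)} n' f' → C n f = C n' f'
  mul_left : ∀ (n : ℕ) (f : ℤ → ℤ) (i : ℤ), 2 ≤ n → IsBAP n f →
    (f i = i + 1 ∨ f (i + 1) = i + (n : ℤ)) → C n f = C n (mulS n i f)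
  mul_right : ∀ (n : ℕ) (f : ℤ → ℤ) (i : ℤ), 2 ≤ n → IsBAP n f →
    (f i = i + 1 ∨ f (i + 1) = i + (n : ℤ)) → C n f = C n (smulS n i f)
  conj_inv : ∀ (n : ℕ) (f : ℤ → ℤ) (i : ℤ), IsBAP n f → IsBAP n (conjS n i f) →
    alen n (conjS n i f) = alen n f → C n (conjS n i f) = C n f
  double_same : ∀ (n : ℕ) (f : ℤ → ℤ) (i : ℤ), IsBAP n f → DoubleCrossingAt n f i →
    SameCycleMod n f i (i + 1) → C n (conjS n i f) = C n (mulS n i f) + C n f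
  double_diff : ∀ (n : ℕ) (f : ℤ → ℤ) (i : ℤ), IsBAP n f → DoubleCrossingAt n f i →
    ¬ SameCycleMod n f i (i + 1) → C n (conjS n i f) = C n f

/-- The value `f^r(0)` for `r ∈ ℤ` (using `f^n(0) = kn` to extend periodically). -/
def bigPt (n k : ℕ) (f : ℤ → ℤ) (r : ℤ) : ℤ :=
  f^[(r % (n : ℤ)).toNat] 0 + (r / (n : ℤ)) * ((k : ℤ) * (n : ℤ))

/-- The big path `P_∞` of `f`: the piecewise-linear path through the points
`(r, f^r(0)/n)` for `r ∈ ℤ` (horizontal coordinate `r`, vertical `f^r(0)/n`). -/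
def bigPath (n k : ℕ) (f : ℤ → ℤ) : Set (ℝ × ℝ) :=
  ⋃ r : ℤ, segment ℝ ((r : ℝ), (bigPt n k f r : ℝ) / (n : ℝ))
    ((r : ℝ) + 1, (bigPt n k f (r + 1) : ℝ) / (n : ℝ))

/-- The small path `P^{(f)}`: the piecewise-linear path through the points
`(r, f^r(0)/n)` for `r = 0, 1, …, n`. -/
def smallPath (n : ℕ) (f : ℤ → ℤ) : Set (ℝ × ℝ) :=
  ⋃ r ∈ Finset.range n, segment ℝ ((r : ℝ), ((f^[r] 0 : ℤ) : ℝ) / (n : ℝ))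
    ((r : ℝ) + 1, ((f^[r + 1] 0 : ℤ) : ℝ) / (n : ℝ))

/-- The number of up steps among the first `t` steps of `s`. -/
def upsTo (n : ℕ) (s : Fin n → Bool) (t : ℕ) : ℕ :=
  (Finset.univ.filter (fun r : Fin n => r.val < t ∧ s r = true)).card

/-- The number of lattice paths from `(0,0)` to `(k, n-k)` with unit up and right steps
(`n` steps in total, recorded by `s : Fin n → Bool`, `true` = up) which stay above the
main diagonal of the `k × (n-k)` rectangle and avoid every point of `F`
(points recorded as `(height, horizontal position)`). -/
noncomputable def dyckCount (k n : ℕ) (F : Multiset (ℕ × ℕ)) : ℕ :=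
  Nat.card {s : Fin n → Bool //
    upsTo n s n = k ∧
    (∀ t ≤ n, k * (t - upsTo n s t) ≤ (n - k) * upsTo n s t) ∧
    (∀ t ≤ n, (upsTo n s t, t - upsTo n s t) ∉ F)}

/-- For each `n`-cycle `σ ∈ S_n` (realized as a permutation of `ZMod n`),
there exists a unique bijection `f : ℤ → ℤ` with `f(i+n) = f(i)+n`, `i < f(i) < i+n`,
and `f(i) ≡ σ(i) (mod n)` for all `1 ≤ i ≤ n`. -/
theorem positroid_stmt0 (n : ℕ) [NeZero n] (σ : Equiv.Perm (ZMod n))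
    (hσ : σ.IsCycle ∧ σ.support = Finset.univ) :
    ∃! f : ℤ → ℤ, Function.Bijective f ∧ (∀ i : ℤ, f (i + (n : ℤ)) = f i + (n : ℤ)) ∧
      (∀ i : ℤ, i < f i ∧ f i < i + (n : ℤ)) ∧
      (∀ i : ℤ, 1 ≤ i → i ≤ (n : ℤ) → ((f i : ZMod n) = σ (i : ZMod n))) := by
  obtain ⟨-, hsupp⟩ := hσ
  have hfix : ∀ a : ZMod n, σ a ≠ a := by
    intro a
    have : a ∈ σ.support := by rw [hsupp]; exact Finset.mem_univ a
    exact Equiv.Perm.mem_support.mp this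
  set d : ZMod n → ℕ := fun a => (σ a - a).val with hd
  have hd_pos : ∀ a, 0 < d a := fun a =>
    ZMod.val_pos.mpr (sub_ne_zero.mpr (hfix a))
  have hd_lt : ∀ a, d a < n := fun a => ZMod.val_lt _
  have hd_cast : ∀ a : ZMod n, ((d a : ℕ) : ZMod n) = σ a - a := fun a =>
    ZMod.natCast_rightInverse _
  set f : ℤ → ℤ := fun i => i + (d (i : ZMod n) : ℤ) with hf
  have hper_cast : ∀ i : ℤ, ((i + (n : ℤ) : ℤ) : ZMod n) = (i : ZMod n) := by
    intro i; push_cast; simp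
  have hcong : ∀ i : ℤ, ((f i : ZMod n) = σ (i : ZMod n)) := by
    intro i
    simp only [hf]
    push_cast
    rw [hd_cast]
    ring
  have hinj : Function.Injective f := by
    intro i j hij
    have h1 : (f i : ZMod n) = (f j : ZMod n) := by rw [hij]
    rw [hcong, hcong] at h1
    have h2 : (i : ZMod n) = (j : ZMod n) := σ.injective h1
    simp only [hf, h2] at hij
    omega
  have hsurj : Function.Surjective f := by
    intro m
    refine ⟨m - (d (σ⁻¹ (m : ZMod n)) : ℤ), ?_⟩
    have hres : ((m - (d (σ⁻¹ (m : ZMod n)) : ℤ) : ℤ) : ZMod n) = σ⁻¹ (m : ZMod n) := by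
      push_cast
      rw [hd_cast]
      have : σ (σ⁻¹ (m : ZMod n)) = (m : ZMod n) := σ.apply_symm_apply _
      rw [this]; ring
    simp only [hf, hres]
    ring
  refine ⟨f, ⟨⟨hinj, hsurj⟩, ?_, ?_, fun i _ _ => hcong i⟩, ?_⟩
  · intro i
    simp only [hf, hper_cast]; ring
  · intro i
    have := hd_pos (i : ZMod n)
    have := hd_lt (i : ZMod n)
    simp only [hf]
    omega
  · -- uniqueness
    rintro g ⟨-, hgper, hgbd, hgcong⟩
    have hgk : ∀ (k : ℤ) (i : ℤ), g (i + k * n) = g i + k * n := by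
      intro k
      induction k using Int.induction_on with
      | zero => simp
      | succ m ih => intro i; have := hgper (i + m * n); push_cast at *;
                     rw [show i + (m + 1) * n = (i + m * n) + (n:ℤ) by ring, this, ih]; ring
      | pred m ih =>
        intro i
        have h1 := hgper (i + (-(m:ℤ) - 1) * n)
        rw [show i + (-(m:ℤ) - 1) * n + n = i + (-(m:ℤ)) * n by ring] at h1
        have h2 := ih i
        have h3 : g (i + (-(m:ℤ) - 1) * n) = g i + (-(m:ℤ) - 1) * n := by linarith
        convert h3 using 3 <;> push_cast <;> ring
    have hfk : ∀ (k : ℤ) (i : ℤ), f (i + k * n) = f i + k * n := by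
      intro k i
      have : ((i + k * n : ℤ) : ZMod n) = (i : ZMod n) := by push_cast; simp
      simp only [hf, this]; ring
    funext i
    have hn1 : (1 : ℤ) ≤ n := by have := NeZero.pos n; omega
    set j : ℤ := (i - 1) % n + 1 with hj
    have hj1 : 1 ≤ j := by
      have := Int.emod_nonneg (i - 1) (by omega : (n:ℤ) ≠ 0); omega
    have hj2 : j ≤ n := by
      have := Int.emod_lt_of_pos (i - 1) (by omega : (0:ℤ) < n); omega
    have hi : i = j + ((i - 1) / n) * n := by
      have := Int.emod_add_mul_ediv (i - 1) n
      rw [hj, mul_comm]; omega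
    have hcg : (g j : ZMod n) = (f j : ZMod n) := by
      rw [hgcong j hj1 hj2, hcong j]
    have hdvd : (n : ℤ) ∣ g j - f j := by
      have := (ZMod.intCast_eq_intCast_iff' (g j) (f j) n).mp ?_
      · exact Int.ModEq.dvd this.symm
      · exact_mod_cast hcg
    have hb1 := hgbd j
    have hb2 : j < f j ∧ f j < j + n := by
      have := hd_pos (j : ZMod n); have := hd_lt (j : ZMod n)
      simp only [hf]; omega
    have heq : g j = f j := by
      have : g j - f j = 0 := Int.eq_zero_of_abs_lt_dvd hdvd (abs_lt.mpr ⟨by omega, by omega⟩)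
      omega
    rw [hi, hgk, hfk, heq]
end

section
/- A bounded affine permutation f ∈ Θ_{k,n} (i.e., whose reduction mod n is an n-cycle with winding number k) satisfies f(j) ∈ [j+1, j+n-1] for all j ∈ ℤ; consequently, if f' = s_i f s_i for a simple transposition s_i and ℓ(f') ≤ ℓ(f), then f' is again a bounded affine permutation in Θ_{k,n}. -/
open Finset

section Aux

variable {n : ℕ} {f : ℤ → ℤ}

/-- integer periodicity -/
lemma per_int (hper : ∀ x : ℤ, f (x + (n:ℤ)) = f x + (n:ℤ)) (q : ℤ) (x : ℤ) :
    f (x + q * (n:ℤ)) = f x + q * (n:ℤ) := by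
  induction q using Int.induction_on with
  | zero => simp
  | succ q ih => have := hper (x + q * n); push_cast at *; rw [show x + (q+1)*(n:ℤ) = x + q*n + n by ring, this, ih]; ring
  | pred q ih =>
      have h := hper (x + (-(q:ℤ)-1) * n)
      have h2 : x + (-(q:ℤ) - 1) * (n:ℤ) + n = x + (-q:ℤ) * n := by ring
      rw [h2, ih] at h
      linarith

lemma mod_eq_iff {x y : ℤ} (hn : 0 < (n:ℤ)) : x % (n:ℤ) = y % (n:ℤ) ↔ ∃ q : ℤ, x = y + q * n := by
  constructor
  · intro h
    have : (n:ℤ) ∣ x - y := Int.ModEq.dvd (Int.ModEq.symm h)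
    obtain ⟨q, hq⟩ := this
    exact ⟨q, by linarith [hq]⟩
  · rintro ⟨q, rfl⟩; simp [Int.add_mul_emod_self_left]

lemma f_mod_congr (hper : ∀ x : ℤ, f (x + (n:ℤ)) = f x + (n:ℤ)) (hn : 0 < (n:ℤ))
    {x y : ℤ} (h : x % (n:ℤ) = y % (n:ℤ)) : f x % (n:ℤ) = f y % (n:ℤ) := by
  obtain ⟨q, rfl⟩ := (mod_eq_iff hn).1 h
  rw [per_int hper]; simp [Int.add_mul_emod_self_left]

lemma f_mod_inj (hb : Function.Bijective f) (hper : ∀ x : ℤ, f (x + (n:ℤ)) = f x + (n:ℤ))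
    (hn : 0 < (n:ℤ)) {x y : ℤ} (h : f x % (n:ℤ) = f y % (n:ℤ)) : x % (n:ℤ) = y % (n:ℤ) := by
  obtain ⟨q, hq⟩ := (mod_eq_iff hn).1 h
  have : f x = f (y + q * n) := by rw [per_int hper]; exact hq
  have := hb.1 this
  exact (mod_eq_iff hn).2 ⟨q, this⟩

/- sT basics -/
lemma sT_cases (i x : ℤ) :
    (x % (n:ℤ) = i % (n:ℤ) ∧ sT n i x = x + 1) ∨
    (x % (n:ℤ) ≠ i % (n:ℤ) ∧ x % (n:ℤ) = (i+1) % (n:ℤ) ∧ sT n i x = x - 1) ∨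
    (x % (n:ℤ) ≠ i % (n:ℤ) ∧ x % (n:ℤ) ≠ (i+1) % (n:ℤ) ∧ sT n i x = x) := by
  unfold sT; split_ifs with h1 h2 <;> tauto

lemma mod_ne_succ (hn : 2 ≤ n) (i : ℤ) : i % (n:ℤ) ≠ (i+1) % (n:ℤ) := by
  intro h
  obtain ⟨q, hq⟩ := (mod_eq_iff (by exact_mod_cast Nat.lt_of_lt_of_le Nat.zero_lt_two hn : (0:ℤ) < n)).1 h
  have : q * (n:ℤ) = -1 := by linarith
  have hn' : (2:ℤ) ≤ n := by exact_mod_cast hn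
  rcases le_or_gt q (-1) with h'|h'
  · nlinarith
  · have : 0 ≤ q := by omega
    nlinarith

lemma sT_bounds (i x : ℤ) : x - 1 ≤ sT n i x ∧ sT n i x ≤ x + 1 := by
  rcases sT_cases i x with ⟨_,h⟩|⟨_,_,h⟩|⟨_,_,h⟩ <;> rw [h] <;> omega

lemma sT_eq_add_one {i x : ℤ} (h : x % (n:ℤ) = i % (n:ℤ)) : sT n i x = x + 1 := by
  unfold sT; simp [h]

lemma sT_eq_sub_one (hn : 2 ≤ n) {i x : ℤ} (h : x % (n:ℤ) = (i+1) % (n:ℤ)) : sT n i x = x - 1 := by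
  unfold sT
  rw [if_neg, if_pos h]
  rw [h]; exact fun hc => mod_ne_succ hn i hc.symm

lemma sT_eq_self {i x : ℤ} (h1 : x % (n:ℤ) ≠ i % (n:ℤ)) (h2 : x % (n:ℤ) ≠ (i+1) % (n:ℤ)) :
    sT n i x = x := by
  unfold sT; rw [if_neg h1, if_neg h2]

lemma sT_invol (hn : 2 ≤ n) (i x : ℤ) : sT n i (sT n i x) = x := by
  have hn0 : (0:ℤ) < n := by exact_mod_cast Nat.lt_of_lt_of_le Nat.zero_lt_two hn
  rcases sT_cases (n := n) i x with ⟨h,hs⟩|⟨h1,h,hs⟩|⟨h1,h2,hs⟩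
  · rw [hs]
    have : (x+1) % (n:ℤ) = (i+1) % (n:ℤ) := by
      rw [Int.add_emod, h, ← Int.add_emod]
    exact (sT_eq_sub_one hn this).trans (by ring)
  · rw [hs]
    have : (x-1) % (n:ℤ) = i % (n:ℤ) := by
      have : (x-1) % (n:ℤ) = ((i+1)-1) % (n:ℤ) := by
        rw [Int.sub_emod, h, ← Int.sub_emod]
      simpa using this
    exact (sT_eq_add_one this).trans (by ring)
  · rw [hs]; exact sT_eq_self h1 h2

lemma sT_per (i : ℤ) (q x : ℤ) : sT n i (x + q * (n:ℤ)) = sT n i x + q * (n:ℤ) := by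
  unfold sT
  have h : (x + q * (n:ℤ)) % (n:ℤ) = x % (n:ℤ) := Int.add_mul_emod_self_right _ _ _
  rw [h]
  split_ifs <;> ring

lemma sT_bij (hn : 2 ≤ n) (i : ℤ) : Function.Bijective (sT n i) :=
  Function.bijective_iff_has_inverse.2 ⟨sT n i, sT_invol hn i, sT_invol hn i⟩

end Aux

section Orbit

variable {n : ℕ} {f : ℤ → ℤ}

lemma iter_mod (hper : ∀ x : ℤ, f (x + (n:ℤ)) = f x + (n:ℤ)) (hn : 0 < (n:ℤ))
    {x y : ℤ} (h : x % (n:ℤ) = y % (n:ℤ)) (r : ℕ) : f^[r] x % (n:ℤ) = f^[r] y % (n:ℤ) := by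
  induction r with
  | zero => simpa using h
  | succ r ih => rw [Function.iterate_succ_apply', Function.iterate_succ_apply']
                 exact f_mod_congr hper hn ih

lemma orbit_injOn (hb : Function.Bijective f) (hper : ∀ x : ℤ, f (x + (n:ℤ)) = f x + (n:ℤ))
    (hcyc : IsCycleMod n f) (hn : 0 < n) {r r' : ℕ} (hr : r < n) (hr' : r' < n)
    (h : f^[r] 0 % (n:ℤ) = f^[r'] 0 % (n:ℤ)) : r = r' := by
  classical
  have hn0 : (0:ℤ) < n := by exact_mod_cast hn
  set F : ℕ → ℤ := fun r => f^[r] 0 % (n:ℤ) with hF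
  have hsub : (Finset.range n).image F ⊆ Finset.Ico (0:ℤ) n := by
    intro x hx
    simp only [Finset.mem_image] at hx
    obtain ⟨r, _, rfl⟩ := hx
    exact Finset.mem_Ico.2 ⟨Int.emod_nonneg _ (by positivity), Int.emod_lt_of_pos _ hn0⟩
  have hsup : Finset.Ico (0:ℤ) (n:ℤ) ⊆ (Finset.range n).image F := by
    intro x hx
    rw [Finset.mem_Ico] at hx
    obtain ⟨r, hrn, hr⟩ := hcyc x
    rw [Int.emod_eq_of_lt hx.1 hx.2] at hr
    exact Finset.mem_image.2 ⟨r, Finset.mem_range.2 hrn, hr⟩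
  have heq : (Finset.range n).image F = Finset.Ico (0:ℤ) n := le_antisymm hsub hsup
  have hcard : ((Finset.range n).image F).card = (Finset.range n).card := by
    rw [heq, Int.card_Ico, Finset.card_range]; simp
  have hinj := Finset.injOn_of_card_image_eq hcard
  exact hinj (Finset.mem_coe.2 (Finset.mem_range.2 hr)) (Finset.mem_coe.2 (Finset.mem_range.2 hr')) h

lemma orbit_n_eq_zero (hb : Function.Bijective f) (hper : ∀ x : ℤ, f (x + (n:ℤ)) = f x + (n:ℤ))
    (hcyc : IsCycleMod n f) (hn : 0 < n) : f^[n] 0 % (n:ℤ) = 0 % (n:ℤ) := by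
  have hn0 : (0:ℤ) < n := by exact_mod_cast hn
  obtain ⟨r, hrn, hr⟩ := hcyc (f^[n] 0)
  rcases Nat.eq_zero_or_pos r with h0 | hpos
  · subst h0; simpa using hr.symm
  · exfalso
    obtain ⟨r', rfl⟩ : ∃ r', r = r' + 1 := ⟨r - 1, by omega⟩
    rw [Function.iterate_succ_apply'] at hr
    have hn1 : f^[n] 0 = f (f^[n-1] 0) := by
      conv_lhs => rw [show n = (n-1) + 1 by omega, Function.iterate_succ_apply']
    rw [hn1] at hr
    have := f_mod_inj hb hper hn0 hr
    have := orbit_injOn hb hper hcyc hn (by omega) (by omega) this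
    omega

lemma orbit_add_n (hb : Function.Bijective f) (hper : ∀ x : ℤ, f (x + (n:ℤ)) = f x + (n:ℤ))
    (hcyc : IsCycleMod n f) (hn : 0 < n) (r : ℕ) :
    f^[r + n] 0 % (n:ℤ) = f^[r] 0 % (n:ℤ) := by
  have hn0 : (0:ℤ) < n := by exact_mod_cast hn
  induction r with
  | zero => simpa using orbit_n_eq_zero hb hper hcyc hn
  | succ r ih =>
      rw [show r + 1 + n = (r + n) + 1 by omega, Function.iterate_succ_apply',
        Function.iterate_succ_apply']
      exact f_mod_congr hper hn0 ih

lemma orbit_mod_idx (hb : Function.Bijective f) (hper : ∀ x : ℤ, f (x + (n:ℤ)) = f x + (n:ℤ))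
    (hcyc : IsCycleMod n f) (hn : 0 < n) (r : ℕ) :
    f^[r] 0 % (n:ℤ) = f^[r % n] 0 % (n:ℤ) := by
  induction r using Nat.strong_induction_on with
  | _ r ih =>
    rcases Nat.lt_or_ge r n with h | h
    · rw [Nat.mod_eq_of_lt h]
    · have e : (r - n) + n = r := by omega
      have h2 := orbit_add_n hb hper hcyc hn (r - n)
      rw [e] at h2
      rw [h2, ih (r - n) (by omega)]
      conv_rhs => rw [← e]
      rw [Nat.add_mod_right]

/-- no residue is fixed mod n -/
lemma no_fix_mod (hb : Function.Bijective f) (hper : ∀ x : ℤ, f (x + (n:ℤ)) = f x + (n:ℤ))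
    (hcyc : IsCycleMod n f) (hn : 2 ≤ n) (j : ℤ) : f j % (n:ℤ) ≠ j % (n:ℤ) := by
  intro hfix
  have hn' : 0 < n := by omega
  have hn0 : (0:ℤ) < n := by exact_mod_cast hn'
  obtain ⟨r, hrn, hr⟩ := hcyc j
  have hstep : f^[r+1] 0 % (n:ℤ) = j % (n:ℤ) := by
    rw [Function.iterate_succ_apply']
    rw [f_mod_congr hper hn0 hr, hfix]
  rcases Nat.lt_or_ge (r+1) n with h | h
  · have := orbit_injOn hb hper hcyc hn' h hrn (hstep.trans hr.symm)
    omega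
  · have hr1 : r = n - 1 := by omega
    have hn2 : f^[n] 0 % (n:ℤ) = j % (n:ℤ) := by
      have := hstep; rw [show r + 1 = n by omega] at this; exact this
    have h0 : (0:ℤ) % n = j % n := (orbit_n_eq_zero hb hper hcyc hn').symm.trans hn2
    have : f^[0] 0 % (n:ℤ) = f^[r] 0 % (n:ℤ) := by simpa using (h0.trans hr.symm)
    have := orbit_injOn hb hper hcyc hn' (by omega) hrn this
    omega

end Orbit

section Conj

variable {n : ℕ} {f : ℤ → ℤ}

/-- strict bounds for Θ elements -/
lemma strict_bounds (hn : 2 ≤ n) (hbap : IsBAP n f) (hcyc : IsCycleMod n f) (j : ℤ) :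
    j + 1 ≤ f j ∧ f j ≤ j + (n:ℤ) - 1 := by
  obtain ⟨⟨hb, hper⟩, hbd⟩ := hbap
  obtain ⟨h1, h2⟩ := hbd j
  have hne := no_fix_mod hb hper hcyc hn j
  constructor
  · rcases lt_or_eq_of_le h1 with h | h
    · omega
    · exact absurd (by rw [← h]) hne
  · rcases lt_or_eq_of_le h2 with h | h
    · omega
    · exfalso; apply hne; rw [h, show j + (n:ℤ) = j + 1 * n by ring]
      exact Int.add_mul_emod_self_right _ _ _

lemma conjS_per (hn : 2 ≤ n) (hper : ∀ x : ℤ, f (x + (n:ℤ)) = f x + (n:ℤ)) (i : ℤ) (q x : ℤ) :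
    conjS n i f (x + q * (n:ℤ)) = conjS n i f x + q * (n:ℤ) := by
  unfold conjS
  rw [sT_per, per_int hper, sT_per]

lemma conjS_bij (hn : 2 ≤ n) (hb : Function.Bijective f) (i : ℤ) :
    Function.Bijective (conjS n i f) := by
  have hs := sT_bij (n := n) hn i
  exact (hs.comp hb).comp hs

lemma conjS_iter (hn : 2 ≤ n) (i : ℤ) (r : ℕ) (x : ℤ) :
    (conjS n i f)^[r] x = sT n i (f^[r] (sT n i x)) := by
  induction r generalizing x with
  | zero => simp [sT_invol hn]
  | succ r ih =>
      rw [Function.iterate_succ_apply, ih]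
      unfold conjS
      rw [sT_invol hn, ← Function.iterate_succ_apply]

lemma conjS_cycle (hn : 2 ≤ n) (hb : Function.Bijective f)
    (hper : ∀ x : ℤ, f (x + (n:ℤ)) = f x + (n:ℤ)) (hcyc : IsCycleMod n f) (i : ℤ) :
    IsCycleMod n (conjS n i f) := by
  intro j
  have hn' : 0 < n := by omega
  have hn0 : (0:ℤ) < n := by exact_mod_cast hn'
  have hsper : ∀ x : ℤ, sT n i (x + (n:ℤ)) = sT n i x + (n:ℤ) := by
    intro x
    have := sT_per (n := n) i 1 x
    simpa using this
  -- residue of starting point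
  obtain ⟨r0, hr0n, hr0⟩ := hcyc (sT n i 0)
  -- residue of target
  obtain ⟨r', hr'n, hr'⟩ := hcyc (sT n i j)
  refine ⟨(r' + n - r0) % n, Nat.mod_lt _ hn', ?_⟩
  rw [conjS_iter hn]
  set r := (r' + n - r0) % n with hr
  have key : f^[r] (sT n i 0) % (n:ℤ) = (sT n i j) % (n:ℤ) := by
    have h1 : f^[r] (sT n i 0) % (n:ℤ) = f^[r] (f^[r0] 0) % (n:ℤ) :=
      iter_mod hper hn0 hr0.symm r
    rw [h1, ← Function.iterate_add_apply]
    rw [orbit_mod_idx hb hper hcyc hn']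
    have hidx : (r + r0) % n = r' := by
      rw [hr, Nat.mod_add_mod, show r' + n - r0 + r0 = r' + n by omega,
        Nat.add_mod_right, Nat.mod_eq_of_lt hr'n]
    rw [hidx, hr']
  calc sT n i (f^[r] (sT n i 0)) % (n:ℤ)
      = sT n i (sT n i j) % (n:ℤ) := f_mod_congr hsper hn0 key
    _ = j % (n:ℤ) := by rw [sT_invol hn]

end Conj

section Wind

variable {n : ℕ}

/-- displacement sum -/
noncomputable def dsum (n : ℕ) (h : ℤ → ℤ) : ℤ := ∑ m ∈ Finset.Icc (1:ℤ) (n:ℤ), (h m - m)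

lemma mod_inj_on_Icc (hn : 0 < n) {m m' : ℤ} (hm : m ∈ Finset.Icc (1:ℤ) (n:ℤ))
    (hm' : m' ∈ Finset.Icc (1:ℤ) (n:ℤ)) (h : m % (n:ℤ) = m' % (n:ℤ)) : m = m' := by
  rw [Finset.mem_Icc] at hm hm'
  have hn0 : (0:ℤ) < n := by exact_mod_cast hn
  obtain ⟨q, hq⟩ := (mod_eq_iff hn0).1 h
  rcases lt_trichotomy q 0 with h' | h' | h'
  · have : q * (n:ℤ) ≤ -n := by nlinarith
    omega
  · subst h'; simp at hq; omega
  · have : (n:ℤ) ≤ q * n := by nlinarith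
    omega

lemma periodic_eq_mod (hn : 0 < n) {φ : ℤ → ℤ} (hper : ∀ x : ℤ, φ (x + (n:ℤ)) = φ x)
    (x : ℤ) : φ x = φ (x % (n:ℤ)) := by
  have hper2 : ∀ x : ℤ, (fun y => φ y + y) (x + (n:ℤ)) = (fun y => φ y + y) x + (n:ℤ) := by
    intro x; simp only [hper x]; ring
  have hper' : ∀ q y : ℤ, φ (y + q * n) = φ y := by
    intro q y
    have := per_int (f := fun y => φ y + y) hper2 q y
    linarith
  conv_lhs => rw [← Int.emod_add_mul_ediv x (n:ℤ)]
  rw [show x % (n:ℤ) + (n:ℤ) * (x / n) = x % n + (x / n) * n by ring, hper']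

/-- sum of an n-periodic function over the image of a complete residue system -/
lemma sum_comp_resid (hn : 0 < n) {φ : ℤ → ℤ} (hφ : ∀ x : ℤ, φ (x + (n:ℤ)) = φ x)
    {q : ℤ → ℤ} (hqb : Function.Bijective q) (hqper : ∀ x : ℤ, q (x + (n:ℤ)) = q x + (n:ℤ)) :
    ∑ m ∈ Finset.Icc (1:ℤ) (n:ℤ), φ (q m) = ∑ c ∈ Finset.Ico (0:ℤ) (n:ℤ), φ c := by
  have hn0 : (0:ℤ) < n := by exact_mod_cast hn
  have hinj : ∀ m ∈ Finset.Icc (1:ℤ) (n:ℤ), ∀ m' ∈ Finset.Icc (1:ℤ) (n:ℤ),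
      q m % (n:ℤ) = q m' % (n:ℤ) → m = m' := fun m hm m' hm' h =>
    mod_inj_on_Icc hn hm hm' (f_mod_inj hqb hqper hn0 h)
  have himg : (Finset.Icc (1:ℤ) (n:ℤ)).image (fun m => q m % (n:ℤ)) = Finset.Ico (0:ℤ) (n:ℤ) := by
    apply Finset.eq_of_subset_of_card_le
    · intro x hx
      simp only [Finset.mem_image] at hx
      obtain ⟨m, _, rfl⟩ := hx
      exact Finset.mem_Ico.2 ⟨Int.emod_nonneg _ (by positivity), Int.emod_lt_of_pos _ hn0⟩
    · rw [Finset.card_image_of_injOn (fun m hm m' hm' h => hinj m hm m' hm' h)]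
      rw [Int.card_Ico, Int.card_Icc]
      simp
  calc ∑ m ∈ Finset.Icc (1:ℤ) (n:ℤ), φ (q m)
      = ∑ m ∈ Finset.Icc (1:ℤ) (n:ℤ), φ (q m % (n:ℤ)) := by
        apply Finset.sum_congr rfl; intro m _; exact periodic_eq_mod hn hφ (q m)
    _ = ∑ c ∈ (Finset.Icc (1:ℤ) (n:ℤ)).image (fun m => q m % (n:ℤ)), φ c := by
        rw [Finset.sum_image hinj]
    _ = ∑ c ∈ Finset.Ico (0:ℤ) (n:ℤ), φ c := by rw [himg]

lemma dsum_comp (hn : 0 < n) {p q : ℤ → ℤ} (hpper : ∀ x : ℤ, p (x + (n:ℤ)) = p x + (n:ℤ))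
    (hqb : Function.Bijective q) (hqper : ∀ x : ℤ, q (x + (n:ℤ)) = q x + (n:ℤ)) :
    dsum n (p ∘ q) = dsum n p + dsum n q := by
  have hφ : ∀ x : ℤ, (fun y => p y - y) (x + (n:ℤ)) = (fun y => p y - y) x := by
    intro x; simp only [hpper x]; ring
  have h1 : dsum n (p ∘ q) = (∑ m ∈ Finset.Icc (1:ℤ) (n:ℤ), (p (q m) - q m)) + dsum n q := by
    unfold dsum
    rw [← Finset.sum_add_distrib]
    apply Finset.sum_congr rfl; intro m _; simp only [Function.comp_apply]; ring
  have h2 : dsum n p = ∑ c ∈ Finset.Ico (0:ℤ) (n:ℤ), (p c - c) := by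
    have := sum_comp_resid hn (φ := fun y => p y - y) hφ Function.bijective_id (fun x => rfl)
    simp only [id_eq] at this
    unfold dsum
    exact this
  have h3 := sum_comp_resid hn (φ := fun y => p y - y) hφ hqb hqper
  rw [h1, h2]
  linarith [h3]

lemma dsum_sT (hn : 2 ≤ n) (i : ℤ) : dsum n (sT n i) = 0 := by
  have hn' : 0 < n := by omega
  have hper : ∀ x : ℤ, sT n i (x + (n:ℤ)) = sT n i x + (n:ℤ) := by
    intro x; have := sT_per (n := n) i 1 x; simpa using this
  have hid : (sT n i) ∘ (sT n i) = id := funext fun x => sT_invol hn i x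
  have h := dsum_comp hn' hper (sT_bij hn i) hper
  rw [hid] at h
  have hzero : dsum n (id : ℤ → ℤ) = 0 := by unfold dsum; simp
  omega

lemma winding_eq_dsum (hn : 0 < n) {h : ℤ → ℤ} (hb : Function.Bijective h)
    (hper : ∀ x : ℤ, h (x + (n:ℤ)) = h x + (n:ℤ))
    (hbd : ∀ m : ℤ, m ≤ h m ∧ h m ≤ m + (n:ℤ)) :
    (winding n h : ℤ) * (n:ℤ) = dsum n h := by
  classical
  have hn0 : (0:ℤ) < n := by exact_mod_cast hn
  set hbar : ℤ → ℤ := fun m => if (n:ℤ) < h m then h m - n else h m with hhbar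
  have hbarmod : ∀ m : ℤ, hbar m % (n:ℤ) = h m % (n:ℤ) := by
    intro m
    simp only [hhbar]
    split_ifs with hc
    · exact (mod_eq_iff hn0).2 ⟨-1, by ring⟩
    · rfl
  have hmem : ∀ m ∈ Finset.Icc (1:ℤ) (n:ℤ), hbar m ∈ Finset.Icc (1:ℤ) (n:ℤ) := by
    intro m hm
    rw [Finset.mem_Icc] at hm ⊢
    obtain ⟨h1, h2⟩ := hbd m
    simp only [hhbar]
    split_ifs with hc <;> omega
  have hinj : ∀ m ∈ Finset.Icc (1:ℤ) (n:ℤ), ∀ m' ∈ Finset.Icc (1:ℤ) (n:ℤ),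
      hbar m = hbar m' → m = m' := by
    intro m hm m' hm' he
    apply mod_inj_on_Icc hn hm hm'
    apply f_mod_inj hb hper hn0
    rw [← hbarmod m, ← hbarmod m', he]
  have himg : (Finset.Icc (1:ℤ) (n:ℤ)).image hbar = Finset.Icc (1:ℤ) (n:ℤ) := by
    apply Finset.eq_of_subset_of_card_le
    · intro x hx
      simp only [Finset.mem_image] at hx
      obtain ⟨m, hm, rfl⟩ := hx
      exact hmem m hm
    · rw [Finset.card_image_of_injOn (fun m hm m' hm' he => hinj m hm m' hm' he)]
  have hsum : ∑ m ∈ Finset.Icc (1:ℤ) (n:ℤ), hbar m = ∑ m ∈ Finset.Icc (1:ℤ) (n:ℤ), m := by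
    conv_rhs => rw [← himg]
    rw [Finset.sum_image hinj]
  have hsplit : ∑ m ∈ Finset.Icc (1:ℤ) (n:ℤ), hbar m
      = (∑ m ∈ Finset.Icc (1:ℤ) (n:ℤ), h m)
        - ∑ m ∈ Finset.Icc (1:ℤ) (n:ℤ), (if (n:ℤ) < h m then (n:ℤ) else 0) := by
    rw [← Finset.sum_sub_distrib]
    apply Finset.sum_congr rfl
    intro m _
    simp only [hhbar]
    split_ifs <;> ring
  have hcnt : ∑ m ∈ Finset.Icc (1:ℤ) (n:ℤ), (if (n:ℤ) < h m then (n:ℤ) else 0)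
      = (winding n h : ℤ) * (n:ℤ) := by
    rw [← Finset.sum_filter, Finset.sum_const]
    unfold winding
    simp [mul_comm]
  have hd : dsum n h = (∑ m ∈ Finset.Icc (1:ℤ) (n:ℤ), h m) - ∑ m ∈ Finset.Icc (1:ℤ) (n:ℤ), m := by
    unfold dsum
    rw [← Finset.sum_sub_distrib]
  omega

end Wind

section Bounded

variable {n : ℕ} {f : ℤ → ℤ}

lemma mult_eq_n {q : ℤ} (hN : (0:ℤ) < (n:ℤ)) (h1 : 0 < q * (n:ℤ)) (h2 : q * (n:ℤ) ≤ (n:ℤ)) :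
    q * (n:ℤ) = (n:ℤ) := by
  rcases lt_trichotomy q 1 with h | h | h
  · have hq0 : q ≤ 0 := by omega
    nlinarith
  · rw [h]; ring
  · nlinarith

lemma mult_eq_zero {q : ℤ} (hN : (0:ℤ) < (n:ℤ)) (h1 : 0 ≤ q * (n:ℤ)) (h2 : q * (n:ℤ) < (n:ℤ)) :
    q * (n:ℤ) = 0 := by
  rcases lt_trichotomy q 0 with h | h | h
  · have hq0 : q ≤ -1 := by omega
    nlinarith
  · rw [h]; ring
  · have hq0 : 1 ≤ q := by omega
    nlinarith

lemma conjS_bounded (hn : 2 ≤ n) (hper : ∀ x : ℤ, f (x + (n:ℤ)) = f x + (n:ℤ))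
    (hstrict : ∀ j : ℤ, j + 1 ≤ f j ∧ f j ≤ j + (n:ℤ) - 1) (i : ℤ)
    (hgood1 : f i ≠ i + 1) (hgood2 : f (i + 1) ≠ i + (n:ℤ)) :
    IsBoundedFn n (conjS n i f) := by
  intro m
  have hn0 : (0:ℤ) < n := by exact_mod_cast (by omega : 0 < n)
  rcases sT_cases (n := n) i m with ⟨hmi, hsm⟩ | ⟨hmi, hmi1, hsm⟩ | ⟨hmi, hmi1, hsm⟩
  · -- m ≡ i
    obtain ⟨q, hq⟩ := (mod_eq_iff hn0).1 hmi
    have hq1 : m + 1 = (i + 1) + q * n := by omega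
    unfold conjS
    rw [hsm]
    set v := f (m + 1) with hv
    have hv1 : m + 2 ≤ v := by have := (hstrict (m+1)).1; omega
    have hv2 : v ≤ m + (n:ℤ) := by have := (hstrict (m+1)).2; omega
    rcases sT_cases (n := n) i v with ⟨hvi, hsv⟩ | ⟨hvi, hvi1, hsv⟩ | ⟨hvi, hvi1, hsv⟩
    · exfalso
      have hvm : v % (n:ℤ) = m % (n:ℤ) := hvi.trans hmi.symm
      obtain ⟨q', hq'⟩ := (mod_eq_iff hn0).1 hvm
      have : q' * (n:ℤ) = n := mult_eq_n hn0 (by omega) (by omega)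
      have hvmn : v = m + (n:ℤ) := by omega
      apply hgood2
      have : f (m + 1) = f (i + 1) + q * n := by rw [hq1]; exact per_int hper q (i+1)
      omega
    · rw [hsv]; omega
    · rw [hsv]; omega
  · -- m ≡ i + 1
    obtain ⟨q, hq⟩ := (mod_eq_iff hn0).1 hmi1
    have hq1 : m - 1 = i + q * n := by omega
    unfold conjS
    rw [hsm]
    set v := f (m - 1) with hv
    have hv1 : m ≤ v := by have := (hstrict (m-1)).1; omega
    have hv2 : v ≤ m + (n:ℤ) - 2 := by have := (hstrict (m-1)).2; omega
    rcases sT_cases (n := n) i v with ⟨hvi, hsv⟩ | ⟨hvi, hvi1, hsv⟩ | ⟨hvi, hvi1, hsv⟩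
    · rw [hsv]; omega
    · exfalso
      have hvm : v % (n:ℤ) = m % (n:ℤ) := hvi1.trans hmi1.symm
      obtain ⟨q', hq'⟩ := (mod_eq_iff hn0).1 hvm
      have : q' * (n:ℤ) = 0 := mult_eq_zero hn0 (by omega) (by omega)
      have hvmn : v = m := by omega
      apply hgood1
      have : f (m - 1) = f i + q * n := by rw [hq1]; exact per_int hper q i
      omega
    · rw [hsv]; omega
  · -- m in neither class
    unfold conjS
    rw [hsm]
    have h1 := (hstrict m).1
    have h2 := (hstrict m).2
    have hb := sT_bounds (n := n) i (f m)
    omega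

end Bounded









section Bad

variable {n : ℕ} {f : ℤ → ℤ}

lemma mem_inversions {p : ℤ × ℤ} :
    p ∈ inversions n f ↔ (1 ≤ p.1 ∧ p.1 ≤ (n:ℤ)) ∧ (1 ≤ p.2 ∧ p.2 ≤ 3*(n:ℤ)) ∧
      p.1 < p.2 ∧ f p.2 < f p.1 := by
  unfold inversions
  rw [Finset.mem_filter, Finset.mem_product, Finset.mem_Icc, Finset.mem_Icc]
  tauto

lemma alen_lt_of_bad (hn : 2 ≤ n) (hb : Function.Bijective f)
    (hper : ∀ x : ℤ, f (x + (n:ℤ)) = f x + (n:ℤ))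
    (hstrict : ∀ j : ℤ, j + 1 ≤ f j ∧ f j ≤ j + (n:ℤ) - 1)
    (i : ℤ) (hbad : f i = i + 1 ∨ f (i + 1) = i + (n:ℤ)) :
    alen n f < alen n (conjS n i f) := by
  classical
  have hn0 : (0:ℤ) < n := by exact_mod_cast (by omega : 0 < n)
  have hnn : (2:ℤ) ≤ n := by exact_mod_cast hn
  set s : ℤ → ℤ := sT n i with hs
  set g : ℤ → ℤ := conjS n i f with hg
  have hsper : ∀ x : ℤ, s (x + (n:ℤ)) = s x + n := fun x => by
    have := sT_per (n := n) i 1 x; simpa using this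
  have hsinv : ∀ x, s (s x) = x := sT_invol hn i
  have hsbij : Function.Bijective s := sT_bij hn i
  have hgq : ∀ q x : ℤ, g (x + q*(n:ℤ)) = g x + q*n := fun q x => conjS_per hn hper i q x
  have hgs : ∀ x, g (s x) = s (f x) := fun x => by
    show conjS n i f (sT n i x) = sT n i (f x)
    unfold conjS
    rw [sT_invol hn]
  -- order preservation of s
  have hslt : ∀ x y : ℤ, x < y → ¬(y = x + 1 ∧ x % (n:ℤ) = i % n) → s x < s y := by
    intro x y hxy hne
    by_contra hge
    push_neg at hge
    have hb2 := sT_bounds (n := n) i y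
    rw [← hs] at hb2
    have hneq : s x ≠ s y := by
      intro h
      have := congrArg s h
      rw [hsinv, hsinv] at this
      omega
    rcases sT_cases (n := n) i x with ⟨hxi, hsx⟩ | ⟨_, _, hsx⟩ | ⟨_, _, hsx⟩
    · apply hne
      refine ⟨?_, hxi⟩
      rw [← hs] at hsx
      omega
    · rw [← hs] at hsx; omega
    · rw [← hs] at hsx; omega
  -- exclusion lemmas
  have hE1 : ∀ a b : ℤ, a < b → f b < f a → ¬(b = a + 1 ∧ a % (n:ℤ) = i % n) := by
    rintro a b hab hfba ⟨hb1, hai⟩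
    obtain ⟨q, hq⟩ := (mod_eq_iff hn0).1 hai
    rcases hbad with hB | hA
    · have h1 : f a = f i + q*n := by rw [hq]; exact per_int hper q i
      have h2 := (hstrict b).1
      omega
    · have h1 : f b = f (i+1) + q*n := by
        rw [hb1, hq, show i + q*(n:ℤ) + 1 = (i+1) + q*n by ring]
        exact per_int hper q (i+1)
      have h2 := (hstrict a).2
      omega
  have hE2 : ∀ a b : ℤ, a < b → f b < f a → ¬(f a = f b + 1 ∧ f b % (n:ℤ) = i % n) := by
    rintro a b hab hfba ⟨hfab, hfbi⟩
    obtain ⟨q, hq⟩ := (mod_eq_iff hn0).1 hfbi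
    rcases hbad with hB | hA
    · have h1 : f (i + q*n) = f b + 1 := by rw [per_int hper q i, hB]; omega
      have h2 : a = i + q*n := hb.1 (by rw [h1, ← hfab])
      have h3 := (hstrict b).1
      omega
    · have h1 : f (i + 1 + q*n) = f b + n := by rw [per_int hper q (i+1), hA]; omega
      have h2 : f (b + 1*(n:ℤ)) = f b + 1*n := per_int hper 1 b
      have h3 : b + 1*(n:ℤ) = i + 1 + q*n := hb.1 (by rw [h2, h1]; ring)
      have h4 := (hstrict a).2
      omega
  -- the injection
  set Φ : ℤ × ℤ → ℤ × ℤ := fun p =>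
    if s p.1 ≤ 0 then (s p.1 + n, s p.2 + n)
    else if (n:ℤ) + 1 ≤ s p.1 then (s p.1 - n, s p.2 - n)
    else (s p.1, s p.2) with hΦ
  have hΦt : ∀ p : ℤ × ℤ, ∃ t : ℤ, Φ p = (s p.1 + t*n, s p.2 + t*n) := by
    intro p
    rw [hΦ]
    simp only
    split_ifs
    · exact ⟨1, by simp [Prod.ext_iff]⟩
    · exact ⟨-1, by simp only [Prod.mk.injEq]; constructor <;> ring⟩
    · exact ⟨0, by simp [Prod.ext_iff]⟩
  -- image lands in inversions of g
  have hmaps : ∀ p ∈ inversions n f, Φ p ∈ inversions n (conjS n i f) := by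
    rintro ⟨a, b⟩ hp
    rw [mem_inversions] at hp
    obtain ⟨⟨ha1, ha2⟩, ⟨hb1, hb2⟩, hab, hfba⟩ := hp
    simp only at ha1 ha2 hb1 hb2 hab hfba
    have hsba := sT_bounds (n := n) i a
    have hsbb := sT_bounds (n := n) i b
    rw [← hs] at hsba hsbb
    have hxy : s a < s b := hslt a b hab (hE1 a b hab hfba)
    have hgab : g (s b) < g (s a) := by
      rw [hgs, hgs]
      exact hslt (f b) (f a) hfba (hE2 a b hab hfba)
    have hbub : b ≤ 2*(n:ℤ) - 3 := by
      have h1 := (hstrict b).1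
      have h2 := (hstrict a).2
      omega
    have hgup : ∀ x : ℤ, g (x + n) = g x + n := fun x => by
      have := hgq 1 x; simpa using this
    have hgdn : ∀ x : ℤ, g (x - n) = g x - n := fun x => by
      have := hgq (-1) x
      rw [show x + (-1)*(n:ℤ) = x - n by ring] at this
      omega
    rw [← hg, mem_inversions]
    rw [hΦ]
    simp only
    split_ifs with hc1 hc2
    · refine ⟨⟨by omega, by omega⟩, ⟨by omega, by omega⟩, by omega, ?_⟩
      simp only
      rw [hgup, hgup]
      omega
    · refine ⟨⟨by omega, by omega⟩, ⟨by omega, by omega⟩, by omega, ?_⟩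
      simp only
      rw [hgdn, hgdn]
      omega
    · exact ⟨⟨by omega, by omega⟩, ⟨by omega, by omega⟩, by omega, by simpa using hgab⟩
  -- injectivity
  have hinj : Set.InjOn Φ (inversions n f) := by
    rintro ⟨a, b⟩ hp ⟨a2, b2⟩ hp2 heq
    rw [Finset.mem_coe, mem_inversions] at hp hp2
    obtain ⟨⟨ha1, ha2⟩, _, hab, _⟩ := hp
    obtain ⟨⟨ha1', ha2'⟩, _, hab', _⟩ := hp2
    simp only at ha1 ha2 hab ha1' ha2' hab'
    obtain ⟨t, ht⟩ := hΦt (a, b)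
    obtain ⟨t2, ht2⟩ := hΦt (a2, b2)
    rw [ht, ht2, Prod.ext_iff] at heq
    simp only at heq
    obtain ⟨heq1, heq2⟩ := heq
    have hmod : s a % (n:ℤ) = s a2 % n := by
      have e1 : (s a + t*(n:ℤ)) % n = s a % n := (mod_eq_iff hn0).2 ⟨t, rfl⟩
      have e2 : (s a2 + t2*(n:ℤ)) % n = s a2 % n := (mod_eq_iff hn0).2 ⟨t2, rfl⟩
      rw [← e1, ← e2, heq1]
    have hamod : a % (n:ℤ) = a2 % n := f_mod_inj hsbij hsper hn0 hmod
    have haa : a = a2 := mod_inj_on_Icc (by omega) (Finset.mem_Icc.2 ⟨ha1, ha2⟩)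
      (Finset.mem_Icc.2 ⟨ha1', ha2'⟩) hamod
    subst haa
    have htn : t * (n:ℤ) = t2 * n := by omega
    have hbb : s b = s b2 := by omega
    have : b = b2 := by
      have := congrArg s hbb
      rw [hsinv, hsinv] at this
      exact this
    simp [this]
  -- the extra inversion
  set i0 : ℤ := (i - 1) % (n:ℤ) + 1 with hi0
  have hi0a : 1 ≤ i0 := by
    have := Int.emod_nonneg (i-1) (by positivity : (n:ℤ) ≠ 0)
    omega
  have hi0b : i0 ≤ (n:ℤ) := by
    have := Int.emod_lt_of_pos (i-1) hn0
    omega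
  have hi0mod : i0 % (n:ℤ) = i % n := by
    apply (mod_eq_iff hn0).2
    refine ⟨-((i-1)/n), ?_⟩
    have := Int.emod_add_mul_ediv (i-1) (n:ℤ)
    rw [hi0]
    linarith
  obtain ⟨q0, hq0⟩ := (mod_eq_iff hn0).1 hi0mod
  have hsi : s i = i + 1 := sT_eq_add_one rfl
  have hsi1 : s (i+1) = i := by rw [hs, sT_eq_sub_one hn rfl]; ring
  have hgi : g i = s (f (i+1)) := by
    show conjS n i f i = s (f (i+1))
    unfold conjS
    rw [← hs, hsi]
  have hgi1 : g (i+1) = s (f i) := by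
    show conjS n i f (i+1) = s (f i)
    unfold conjS
    rw [← hs, hsi1]
  have hkey : g (i+1) < g i := by
    rcases hbad with hB | hA
    · rw [hgi1, hB, hsi1, hgi]
      have h1 := (hstrict (i+1)).1
      have h2 := sT_bounds (n := n) i (f (i+1))
      rw [← hs] at h2
      omega
    · rw [hgi, hA, hgi1]
      have hsfi : s (i + (n:ℤ)) = i + n + 1 := by
        rw [hs]
        apply sT_eq_add_one
        exact (mod_eq_iff hn0).2 ⟨1, by ring⟩
      have h1 := (hstrict i).2
      have h2 := sT_bounds (n := n) i (f i)
      rw [← hs] at h2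
      omega
  have hx0 : (i0, i0 + 1) ∈ inversions n (conjS n i f) := by
    rw [← hg, mem_inversions]
    refine ⟨⟨hi0a, hi0b⟩, ⟨by omega, by omega⟩, by omega, ?_⟩
    simp only
    have e1 : g i0 = g i + q0 * n := by rw [hq0]; exact hgq q0 i
    have e2 : g (i0 + 1) = g (i+1) + q0 * n := by
      rw [hq0, show i + q0*(n:ℤ) + 1 = (i+1) + q0*n by ring]
      exact hgq q0 (i+1)
    omega
  have hnotim : ∀ p ∈ inversions n f, Φ p ≠ (i0, i0 + 1) := by
    rintro ⟨a, b⟩ hp heq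
    rw [mem_inversions] at hp
    obtain ⟨_, _, hab, _⟩ := hp
    simp only at hab
    obtain ⟨t, ht⟩ := hΦt (a, b)
    rw [ht, Prod.ext_iff] at heq
    simp only at heq
    obtain ⟨he1, he2⟩ := heq
    have hexp : (q0 - t) * (n:ℤ) = q0 * n - t * n := by ring
    have hsamod : s a % (n:ℤ) = i % n := by
      have : s a = i + (q0 - t) * n := by omega
      exact (mod_eq_iff hn0).2 ⟨q0 - t, this⟩
    have hsa : a = s a + 1 := by
      conv_lhs => rw [← hsinv a]
      rw [hs, sT_eq_add_one hsamod]
    have hsbmod : s b % (n:ℤ) = (i+1) % n := by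
      have : s b = (i+1) + (q0 - t) * n := by omega
      exact (mod_eq_iff hn0).2 ⟨q0 - t, this⟩
    have hsb : b = s b - 1 := by
      conv_lhs => rw [← hsinv b]
      rw [hs, sT_eq_sub_one hn hsbmod]
    omega
  -- conclusion
  have hsub : ∀ p ∈ inversions n f, Φ p ∈ (inversions n (conjS n i f)).erase (i0, i0+1) :=
    fun p hp => Finset.mem_erase.2 ⟨hnotim p hp, hmaps p hp⟩
  have hcard := Finset.card_le_card_of_injOn Φ hsub hinj
  rw [Finset.card_erase_of_mem hx0] at hcard
  have hpos : 0 < (inversions n (conjS n i f)).card := Finset.card_pos.2 ⟨_, hx0⟩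
  unfold alen
  rw [hg]
  omega

end Bad

/-- Any `f ∈ Θ_{k,n}` satisfies `f(j) ∈ [j+1, j+n-1]` for all `j`;
consequently, if `f' = s_i f s_i` has `ℓ(f') ≤ ℓ(f)` then `f' ∈ Θ_{k,n}` as well. -/
theorem positroid_stmt2 (k n : ℕ) (hk : 1 ≤ k) (hkn : k < n) (f : ℤ → ℤ)
    (hf : IsTheta k n f) :
    (∀ j : ℤ, j + 1 ≤ f j ∧ f j ≤ j + (n : ℤ) - 1) ∧
    (∀ i : ℤ, alen n (conjS n i f) ≤ alen n f → IsTheta k n (conjS n i f)) := by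
  obtain ⟨hbap, hcyc, hwind⟩ := hf
  obtain ⟨⟨hb, hper⟩, hbd⟩ := hbap
  have hn : 2 ≤ n := by omega
  have hn' : 0 < n := by omega
  have hn0 : (0:ℤ) < n := by exact_mod_cast hn'
  have hstrict := strict_bounds hn ⟨⟨hb, hper⟩, hbd⟩ hcyc
  refine ⟨hstrict, ?_⟩
  intro i hlen
  by_cases hbad : f i = i + 1 ∨ f (i + 1) = i + (n:ℤ)
  · exact absurd hlen (not_le.2 (alen_lt_of_bad hn hb hper hstrict i hbad))
  · push_neg at hbad
    obtain ⟨hg1, hg2⟩ := hbad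
    have hgb := conjS_bij hn hb i
    have hgper : ∀ x : ℤ, conjS n i f (x + (n:ℤ)) = conjS n i f x + n := fun x => by
      have := conjS_per hn hper i 1 x; simpa using this
    have hgbd := conjS_bounded hn hper hstrict i hg1 hg2
    have hgcyc := conjS_cycle hn hb hper hcyc i
    refine ⟨⟨⟨hgb, hgper⟩, hgbd⟩, hgcyc, ?_⟩
    have hsper : ∀ x : ℤ, sT n i (x + (n:ℤ)) = sT n i x + n := fun x => by
      have := sT_per (n := n) i 1 x; simpa using this
    have hsbij := sT_bij hn i
    have h1 := winding_eq_dsum hn' hgb hgper hgbd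
    have h2 := winding_eq_dsum hn' hb hper hbd
    have hdg : dsum n (conjS n i f) = dsum n f := by
      have e1 : conjS n i f = (sT n i) ∘ (f ∘ (sT n i)) := rfl
      have hfsb : Function.Bijective (f ∘ (sT n i)) := hb.comp hsbij
      have hfsper : ∀ x : ℤ, (f ∘ (sT n i)) (x + (n:ℤ)) = (f ∘ (sT n i)) x + n := fun x => by
        simp only [Function.comp_apply, hsper, hper]
      rw [e1, dsum_comp hn' hsper hfsb hfsper, dsum_comp hn' hper hsbij hsper, dsum_sT hn]
      ring
    rw [hdg, ← h2] at h1
    have : winding n (conjS n i f) = winding n f :=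
      Nat.cast_injective (mul_right_cancel₀ (by positivity) h1)
    rw [this, hwind]
end

section
/- Every f ∈ Θ_{k,n} has length ℓ(f) ≥ gcd(k,n) - 1, and this bound is attained: the element f_{k,n} s_1 s_2 ⋯ s_{gcd(k,n)-1} belongs to Θ_{k,n} and has length gcd(k,n) - 1, where f_{k,n}(i) = i + k. -/
open Finset

/-- The product `s_1 s_2 ⋯ s_t` as a function `ℤ → ℤ`. -/
def sChain (n : ℕ) : ℕ → (ℤ → ℤ)
  | 0 => id
  | t + 1 => fun m => sChain n t (sT n ((t : ℤ) + 1) m)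

namespace P5

/-! ### Integer congruence helpers -/

lemma cong_iff (n : ℕ) (a b : ℤ) : a % (n : ℤ) = b % (n : ℤ) ↔ (n : ℤ) ∣ b - a :=
  Int.modEq_iff_dvd

lemma cong_add (n : ℕ) {a b : ℤ} (c : ℤ) (h : a % (n : ℤ) = b % (n : ℤ)) :
    (a + c) % (n : ℤ) = (b + c) % (n : ℤ) := by
  rw [cong_iff] at h ⊢; convert h using 1; ring

lemma eq_of_cong_of_abs_lt {n : ℕ} {a b : ℤ} (h : a % (n : ℤ) = b % (n : ℤ))
    (h1 : a - b < n) (h2 : b - a < n) : a = b := by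
  rw [cong_iff] at h
  rcases h with ⟨t, ht⟩
  rcases lt_trichotomy t 0 with h' | h' | h'
  · have h3 : b - a ≤ -(n:ℤ) := by
      calc b - a = (n:ℤ) * t := ht
      _ ≤ (n:ℤ) * (-1) := mul_le_mul_of_nonneg_left (by omega) (by positivity)
      _ = -(n:ℤ) := by ring
    omega
  · rw [h', mul_zero] at ht; omega
  · have h3 : (n : ℤ) ≤ b - a := by
      calc (n:ℤ) = (n:ℤ) * 1 := by ring
      _ ≤ (n:ℤ) * t := mul_le_mul_of_nonneg_left (by omega) (by positivity)
      _ = b - a := ht.symm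
    omega

lemma emod_self_emod (n : ℕ) (a : ℤ) : a % (n : ℤ) % (n : ℤ) = a % (n : ℤ) :=
  Int.emod_emod_of_dvd a dvd_rfl

lemma emod_bounds {n : ℕ} (hn : 0 < n) (a : ℤ) : 0 ≤ a % (n : ℤ) ∧ a % (n : ℤ) < n :=
  ⟨Int.emod_nonneg a (by positivity), Int.emod_lt_of_pos a (by exact_mod_cast hn)⟩

lemma emod_eq_self {n : ℕ} {a : ℤ} (h0 : 0 ≤ a) (h1 : a < n) : a % (n : ℤ) = a :=
  Int.emod_eq_of_lt h0 h1

/-! ### Affine permutation basics -/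

variable {n : ℕ} {f : ℤ → ℤ}

lemma apf_periodZ (hf : IsAffinePerm n f) (x t : ℤ) : f (x + t * n) = f x + t * n := by
  induction t using Int.induction_on with
  | zero => simp
  | succ i ih =>
      have h1 : x + ((i : ℤ) + 1) * n = (x + i * n) + n := by ring
      rw [h1, hf.2, ih]; ring
  | pred i ih =>
      have h1 : x + (-(i : ℤ)) * n = (x + (-(i:ℤ) - 1) * n) + n := by ring
      rw [h1, hf.2] at ih
      omega

lemma apf_congr (hf : IsAffinePerm n f) {x y : ℤ} (h : (n : ℤ) ∣ y - x) :
    f y = f x + (y - x) := by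
  rcases h with ⟨t, ht⟩
  have : y = x + t * n := by rw [mul_comm] at ht; omega
  rw [this, apf_periodZ hf]
  omega

lemma apf_iter_congr (hf : IsAffinePerm n f) {x y : ℤ} (h : (n : ℤ) ∣ y - x) (r : ℕ) :
    f^[r] y = f^[r] x + (y - x) := by
  induction r with
  | zero => simp
  | succ r ih =>
      rw [Function.iterate_succ_apply', Function.iterate_succ_apply', ih]
      have : f (f^[r] x + (y - x)) = f (f^[r] x) + (y - x) := by
        have := apf_congr hf (x := f^[r] x) (y := f^[r] x + (y - x)) (by simpa using h)
        omega
      omega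

lemma apf_iter_cong (hf : IsAffinePerm n f) {x y : ℤ} (h : x % (n:ℤ) = y % (n:ℤ)) (r : ℕ) :
    f^[r] x % (n:ℤ) = f^[r] y % (n:ℤ) := by
  have hd : (n:ℤ) ∣ y - x := (cong_iff n x y).mp h
  rw [apf_iter_congr hf hd r]
  rw [cong_iff]
  simpa using hd

/-! ### Orbits -/

lemma orbit_mem_Ico (hn : 0 < n) {x z : ℤ} (hz : z ∈ orbitF n f x) :
    z ∈ Finset.Ico (0:ℤ) n := by
  simp only [orbitF, Finset.mem_image] at hz
  obtain ⟨r, _, rfl⟩ := hz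
  simpa using emod_bounds hn _

lemma orbit_self_emod {x z : ℤ} (hz : z ∈ orbitF n f x) : z % (n:ℤ) = z := by
  simp only [orbitF, Finset.mem_image] at hz
  obtain ⟨r, _, rfl⟩ := hz
  exact emod_self_emod n _

lemma mem_orbit_self (hn : 0 < n) (x : ℤ) : x % (n:ℤ) ∈ orbitF n f x := by
  simp only [orbitF, Finset.mem_image]
  exact ⟨0, by simpa using hn, rfl⟩

lemma exists_return (hn : 0 < n) (hf : IsAffinePerm n f) (x : ℤ) :
    ∃ p, 0 < p ∧ p ≤ n ∧ f^[p] x % (n:ℤ) = x % (n:ℤ) := by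
  have hmap : ∀ r ∈ Finset.range (n+1), f^[r] x % (n:ℤ) ∈ Finset.Ico (0:ℤ) n := by
    intro r _; simpa using emod_bounds hn _
  have hcard : (Finset.Ico (0:ℤ) (n:ℤ)).card < (Finset.range (n+1)).card := by
    simp [Int.toNat_natCast]
  obtain ⟨r, hr, s, hs, hrs, heq⟩ :=
    Finset.exists_ne_map_eq_of_card_lt_of_maps_to hcard hmap
  simp only [Finset.mem_range] at hr hs
  -- wlog r < s
  rcases lt_or_gt_of_ne hrs with h | h
  case _ =>
    refine ⟨s - r, by omega, by omega, ?_⟩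
    have hd : (n:ℤ) ∣ (f^[s] x) - (f^[r] x) := (cong_iff n _ _).mp heq
    have h2 : f^[r] (f^[s-r] x) = f^[s] x := by
      rw [← Function.iterate_add_apply]
      congr 1; omega
    have h3 : f^[r] (x + (f^[s] x - f^[r] x)) = f^[r] x + (f^[s] x - f^[r] x) := by
      have := apf_iter_congr hf (x := x) (y := x + (f^[s] x - f^[r] x)) (by simpa using hd) r
      omega
    have h4 : f^[s-r] x = x + (f^[s] x - f^[r] x) := by
      apply Function.Injective.iterate hf.1.1 r
      rw [h2, h3]; omega
    rw [h4, cong_iff]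
    have he : x - (x + (f^[s] x - f^[r] x)) = -(f^[s] x - f^[r] x) := by ring
    rw [he]
    exact dvd_neg.mpr hd
  case _ =>
    refine ⟨r - s, by omega, by omega, ?_⟩
    have hd : (n:ℤ) ∣ (f^[r] x) - (f^[s] x) := (cong_iff n _ _).mp heq.symm
    have h2 : f^[s] (f^[r-s] x) = f^[r] x := by
      rw [← Function.iterate_add_apply]
      congr 1; omega
    have h3 : f^[s] (x + (f^[r] x - f^[s] x)) = f^[s] x + (f^[r] x - f^[s] x) := by
      have := apf_iter_congr hf (x := x) (y := x + (f^[r] x - f^[s] x)) (by simpa using hd) s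
      omega
    have h4 : f^[r-s] x = x + (f^[r] x - f^[s] x) := by
      apply Function.Injective.iterate hf.1.1 s
      rw [h2, h3]; omega
    rw [h4, cong_iff]
    have he : x - (x + (f^[r] x - f^[s] x)) = -(f^[r] x - f^[s] x) := by ring
    rw [he]
    exact dvd_neg.mpr hd

lemma traj_periodic (hf : IsAffinePerm n f) {x : ℤ} {p : ℕ}
    (hp : f^[p] x % (n:ℤ) = x % (n:ℤ)) (r : ℕ) :
    f^[r + p] x % (n:ℤ) = f^[r] x % (n:ℤ) := by
  rw [Function.iterate_add_apply]
  exact apf_iter_cong hf hp r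

lemma mem_orbit_iff (hn : 0 < n) (hf : IsAffinePerm n f) {x y : ℤ} :
    y ∈ orbitF n f x ↔ ∃ r : ℕ, f^[r] x % (n:ℤ) = y := by
  constructor
  · intro hy
    simp only [orbitF, Finset.mem_image] at hy
    obtain ⟨r, _, rfl⟩ := hy
    exact ⟨r, rfl⟩
  · rintro ⟨r, rfl⟩
    obtain ⟨p, hp0, hpn, hp⟩ := exists_return hn hf x
    -- reduce r below n using p-periodicity
    have key : ∀ r : ℕ, ∃ r' : ℕ, r' < n ∧ f^[r'] x % (n:ℤ) = f^[r] x % (n:ℤ) := by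
      intro r
      induction r using Nat.strong_induction_on with
      | _ r ih =>
        by_cases h : r < n
        · exact ⟨r, h, rfl⟩
        · have h1 : r - p < r := by omega
          obtain ⟨r', hr', heq⟩ := ih (r - p) h1
          refine ⟨r', hr', ?_⟩
          rw [heq]
          have := traj_periodic hf hp (r - p)
          have h2 : r - p + p = r := by omega
          rw [h2] at this
          exact this.symm
    obtain ⟨r', hr', heq⟩ := key r
    simp only [orbitF, Finset.mem_image]
    exact ⟨r', Finset.mem_range.mpr hr', heq⟩

lemma orbit_symm (hn : 0 < n) (hf : IsAffinePerm n f) {x y : ℤ}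
    (h : y % (n:ℤ) ∈ orbitF n f x) : x % (n:ℤ) ∈ orbitF n f y := by
  rw [mem_orbit_iff hn hf] at h ⊢
  obtain ⟨r, hr⟩ := h
  obtain ⟨p, hp0, hpn, hp⟩ := exists_return hn hf x
  -- multiples of p are return times
  have hmul : ∀ m : ℕ, f^[m * p] x % (n:ℤ) = x % (n:ℤ) := by
    intro m
    induction m with
    | zero => simp
    | succ m ih =>
        have : (m+1) * p = m * p + p := by ring
        rw [this, traj_periodic hf hp, ih]
  have hqr : r ≤ (r / p + 1) * p := by
    have := Nat.lt_div_mul_add (a := r) hp0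
    have h1 : (r / p + 1) * p = r / p * p + p := by ring
    omega
  set a := r / p with ha
  have hx : f^[(a+1)*p] x % (n:ℤ) = x % (n:ℤ) := hmul (a+1)
  have h2 : f^[(a+1)*p] x = f^[(a+1)*p - r] (f^[r] x) := by
    rw [← Function.iterate_add_apply]
    congr 1; omega
  refine ⟨(a+1)*p - r, ?_⟩
  have h3 := apf_iter_cong hf hr ((a+1)*p - r)
  rw [← h3, ← h2]
  exact hx

lemma orbit_congr (hf : IsAffinePerm n f) {x y : ℤ}
    (h : x % (n:ℤ) = y % (n:ℤ)) : orbitF n f x = orbitF n f y :=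
  Finset.image_congr (fun r _ => apf_iter_cong hf h r)

lemma orbit_subset_of_mem (hn : 0 < n) (hf : IsAffinePerm n f) {x y : ℤ}
    (h : y % (n:ℤ) ∈ orbitF n f x) : orbitF n f y ⊆ orbitF n f x := by
  intro z hz
  rw [mem_orbit_iff hn hf] at h hz ⊢
  obtain ⟨s, hs⟩ := h
  obtain ⟨r, hr⟩ := hz
  refine ⟨r + s, ?_⟩
  rw [Function.iterate_add_apply, ← hr]
  exact apf_iter_cong hf hs r

lemma orbit_eq_of_mem (hn : 0 < n) (hf : IsAffinePerm n f) {x y : ℤ}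
    (h : y % (n:ℤ) ∈ orbitF n f x) : orbitF n f y = orbitF n f x :=
  subset_antisymm (orbit_subset_of_mem hn hf h)
    (orbit_subset_of_mem hn hf (orbit_symm hn hf h))

/-! ### The simple transpositions -/

lemma sT_apply_left {i j : ℤ} (h : j % (n:ℤ) = i % (n:ℤ)) : sT n i j = j + 1 := by
  unfold sT; rw [if_pos h]

lemma sT_apply_right {i j : ℤ} (h1 : j % (n:ℤ) ≠ i % (n:ℤ))
    (h2 : j % (n:ℤ) = (i+1) % (n:ℤ)) : sT n i j = j - 1 := by
  unfold sT; rw [if_neg h1, if_pos h2]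

lemma sT_apply_of_ne {i j : ℤ} (h1 : j % (n:ℤ) ≠ i % (n:ℤ))
    (h2 : j % (n:ℤ) ≠ (i+1) % (n:ℤ)) : sT n i j = j := by
  unfold sT; rw [if_neg h1, if_neg h2]

lemma sT_period (i j : ℤ) : sT n i (j + (n:ℤ)) = sT n i j + n := by
  have h : (j + (n:ℤ)) % n = j % n := by
    simpa using Int.add_mul_emod_self_left (a := j) (b := (n:ℤ)) (c := 1)
  unfold sT
  rw [h]
  split_ifs <;> ring

lemma sT_invol (hn2 : 2 ≤ n) (i j : ℤ) : sT n i (sT n i j) = j := by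
  by_cases h1 : j % (n:ℤ) = i % n
  · rw [sT_apply_left h1]
    have hne : (j+1) % (n:ℤ) ≠ i % n := by
      intro hc
      have d1 := (cong_iff n j i).mp h1
      have d2 := (cong_iff n (j+1) i).mp hc
      have d3 : (n:ℤ) ∣ 1 := by
        have := dvd_sub d1 d2
        have he : i - j - (i - (j+1)) = 1 := by ring
        rwa [he] at this
      have := Int.le_of_dvd one_pos d3
      omega
    have h2 : (j+1) % (n:ℤ) = (i+1) % n := by
      rw [cong_iff] at h1 ⊢
      have he : i + 1 - (j + 1) = i - j := by ring
      rwa [he]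
    rw [sT_apply_right hne h2]
    ring
  · by_cases h2 : j % (n:ℤ) = (i+1) % n
    · rw [sT_apply_right h1 h2]
      have h3 : (j-1) % (n:ℤ) = i % n := by
        rw [cong_iff] at h2 ⊢
        have he : i - (j - 1) = i + 1 - j := by ring
        rwa [he]
      rw [sT_apply_left h3]
      ring
    · rw [sT_apply_of_ne h1 h2, sT_apply_of_ne h1 h2]

lemma sT_bijective (hn2 : 2 ≤ n) (i : ℤ) : Function.Bijective (sT n i) :=
  Function.Involutive.bijective (fun j => sT_invol hn2 i j)

lemma smulS_affine (hn2 : 2 ≤ n) (hf : IsAffinePerm n f) (i : ℤ) :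
    IsAffinePerm n (smulS n i f) := by
  constructor
  · exact hf.1.comp (sT_bijective hn2 i)
  · intro m
    show f (sT n i (m + n)) = f (sT n i m) + n
    rw [sT_period, hf.2]

lemma smulS_smulS (hn2 : 2 ≤ n) (i : ℤ) (f : ℤ → ℤ) : smulS n i (smulS n i f) = f :=
  funext fun m => by show f (sT n i (sT n i m)) = f m; rw [sT_invol hn2]

/-! ### Orbits under right multiplication by a transposition -/

lemma smulS_iterate_of_avoid (hn : 0 < n) (hf : IsAffinePerm n f) (i x : ℤ)
    (ha : i % (n:ℤ) ∉ orbitF n f x) (hb : (i+1) % (n:ℤ) ∉ orbitF n f x) (r : ℕ) :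
    (smulS n i f)^[r] x = f^[r] x := by
  induction r with
  | zero => rfl
  | succ r ih =>
    rw [Function.iterate_succ_apply', Function.iterate_succ_apply', ih]
    show f (sT n i (f^[r] x)) = f (f^[r] x)
    congr 1
    apply sT_apply_of_ne
    · intro hc; exact ha ((mem_orbit_iff hn hf).mpr ⟨r, hc⟩)
    · intro hc; exact hb ((mem_orbit_iff hn hf).mpr ⟨r, hc⟩)

lemma orbit_smulS_of_avoid (hn : 0 < n) (hf : IsAffinePerm n f) (i x : ℤ)
    (ha : i % (n:ℤ) ∉ orbitF n f x) (hb : (i+1) % (n:ℤ) ∉ orbitF n f x) :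
    orbitF n (smulS n i f) x = orbitF n f x :=
  Finset.image_congr (fun r _ => by
    rw [smulS_iterate_of_avoid hn hf i x ha hb r])

lemma orbit_smulS_of_avoid' (hn2 : 2 ≤ n) (hf : IsAffinePerm n f) (i x : ℤ)
    (ha : i % (n:ℤ) ∉ orbitF n (smulS n i f) x) (hb : (i+1) % (n:ℤ) ∉ orbitF n (smulS n i f) x) :
    orbitF n (smulS n i f) x = orbitF n f x := by
  have h := orbit_smulS_of_avoid (by omega) (smulS_affine hn2 hf i) i x ha hb
  rw [smulS_smulS hn2] at h
  exact h.symm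

lemma mem_orbit_smulS_merge (hn2 : 2 ≤ n) (hf : IsAffinePerm n f) (i : ℤ)
    (hdiff : i % (n:ℤ) ∉ orbitF n f (i+1)) :
    ((i+1) % (n:ℤ)) ∈ orbitF n (smulS n i f) i := by
  classical
  have hn : 0 < n := by omega
  have hex := exists_return hn hf (i+1)
  have hexP : ∃ p, 0 < p ∧ f^[p] (i+1) % (n:ℤ) = (i+1) % (n:ℤ) :=
    ⟨hex.choose, hex.choose_spec.1, hex.choose_spec.2.2⟩
  set p₁ := Nat.find hexP with hp₁def
  have hp₁ := Nat.find_spec hexP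
  have hmin : ∀ q, q < p₁ → ¬(0 < q ∧ f^[q] (i+1) % (n:ℤ) = (i+1) % (n:ℤ)) :=
    fun q hq => Nat.find_min hexP hq
  have key : ∀ r, 1 ≤ r → r ≤ p₁ → (smulS n i f)^[r] i % (n:ℤ) = f^[r] (i+1) % (n:ℤ) := by
    intro r
    induction r with
    | zero => intro h; omega
    | succ r ih =>
      intro _ hr
      rcases Nat.eq_zero_or_pos r with hr0 | hr0
      · subst hr0
        show (smulS n i f) i % (n:ℤ) = f^[1] (i+1) % n
        have : sT n i i = i + 1 := sT_apply_left rfl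
        show f (sT n i i) % (n:ℤ) = f^[1] (i+1) % n
        rw [this, Function.iterate_one]
      · have ihr := ih hr0 (by omega)
        rw [Function.iterate_succ_apply', Function.iterate_succ_apply']
        have hz1 : f^[r] (i+1) % (n:ℤ) ≠ i % n := by
          intro hc
          exact hdiff ((mem_orbit_iff hn hf).mpr ⟨r, hc⟩)
        have hz2 : f^[r] (i+1) % (n:ℤ) ≠ (i+1) % n := by
          intro hc
          exact hmin r (by omega) ⟨hr0, hc⟩
        have hy1 : (smulS n i f)^[r] i % (n:ℤ) ≠ i % n := by rw [ihr]; exact hz1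
        have hy2 : (smulS n i f)^[r] i % (n:ℤ) ≠ (i+1) % n := by rw [ihr]; exact hz2
        show f (sT n i ((smulS n i f)^[r] i)) % (n:ℤ) = f (f^[r] (i+1)) % n
        rw [sT_apply_of_ne hy1 hy2]
        have := apf_iter_cong hf ihr 1
        simpa using this
  have hmem := key p₁ hp₁.1 le_rfl
  exact (mem_orbit_iff hn (smulS_affine hn2 hf i)).mpr ⟨p₁, by rw [hmem, hp₁.2]⟩

/-! ### Cycle counting -/

lemma numCycles_smulS_le (hn2 : 2 ≤ n) (hf : IsAffinePerm n f) (i : ℤ) :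
    numCycles n (smulS n i f) ≤ numCycles n f + 1 := by
  classical
  have hn : 0 < n := by omega
  set f' := smulS n i f with hf'def
  have hf'a : IsAffinePerm n f' := smulS_affine hn2 hf i
  set I := (Finset.range n).image (fun a : ℕ => orbitF n f (a:ℤ)) with hI
  set I' := (Finset.range n).image (fun a : ℕ => orbitF n f' (a:ℤ)) with hI'
  set a := i % (n:ℤ) with hadef
  set b := (i+1) % (n:ℤ) with hbdef
  set Ig := I'.filter (fun B => a ∉ B ∧ b ∉ B) with hIg
  have step1 : I' ⊆ Ig ∪ {orbitF n f' i, orbitF n f' (i+1)} := by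
    intro B hB
    by_cases hai : a ∈ B
    · obtain ⟨c, _, rfl⟩ := Finset.mem_image.mp hB
      have : orbitF n f' i = orbitF n f' (c:ℤ) := orbit_eq_of_mem hn hf'a hai
      rw [Finset.mem_union]
      right
      simp [← this]
    · by_cases hbi : b ∈ B
      · obtain ⟨c, _, rfl⟩ := Finset.mem_image.mp hB
        have : orbitF n f' (i+1) = orbitF n f' (c:ℤ) := orbit_eq_of_mem hn hf'a hbi
        rw [Finset.mem_union]
        right
        simp [← this]
      · exact Finset.mem_union_left _ (Finset.mem_filter.mpr ⟨hB, hai, hbi⟩)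
  have step2 : Ig ⊆ I.filter (fun B => a ∉ B ∧ b ∉ B) := by
    intro B hB
    obtain ⟨hB', hai, hbi⟩ := Finset.mem_filter.mp hB
    obtain ⟨c, hc, rfl⟩ := Finset.mem_image.mp hB'
    have heq : orbitF n f' (c:ℤ) = orbitF n f (c:ℤ) :=
      orbit_smulS_of_avoid' hn2 hf i (c:ℤ) hai hbi
    rw [heq] at hai hbi ⊢
    exact Finset.mem_filter.mpr ⟨Finset.mem_image.mpr ⟨c, hc, rfl⟩, hai, hbi⟩
  -- the orbit of i under f, as an element of I
  have hc₀ : orbitF n f ((a.toNat : ℤ)) = orbitF n f i := by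
    apply orbit_congr hf
    have ha0 : (0:ℤ) ≤ a := (emod_bounds hn i).1
    have : ((a.toNat : ℤ)) = a := Int.toNat_of_nonneg ha0
    rw [this, hadef, emod_self_emod]
  have hOiI : orbitF n f i ∈ I := by
    rw [← hc₀]
    apply Finset.mem_image.mpr
    refine ⟨a.toNat, Finset.mem_range.mpr ?_, rfl⟩
    have := (emod_bounds hn i).2
    omega
  have haOi : a ∈ orbitF n f i := mem_orbit_self hn i
  have step3 : I.filter (fun B => a ∉ B ∧ b ∉ B) ⊆ I.erase (orbitF n f i) := by
    intro B hB
    obtain ⟨hBI, hai, _⟩ := Finset.mem_filter.mp hB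
    exact Finset.mem_erase.mpr ⟨fun hc => hai (hc ▸ haOi), hBI⟩
  have c1 : I'.card ≤ Ig.card + 2 := by
    calc I'.card ≤ (Ig ∪ {orbitF n f' i, orbitF n f' (i+1)}).card := Finset.card_le_card step1
    _ ≤ Ig.card + ({orbitF n f' i, orbitF n f' (i+1)} : Finset _).card := Finset.card_union_le _ _
    _ ≤ Ig.card + 2 := by
        have := Finset.card_insert_le (orbitF n f' i) ({orbitF n f' (i+1)} : Finset _)
        simp only [Finset.card_singleton] at this
        omega
  have c2 : Ig.card ≤ I.card - 1 := by
    calc Ig.card ≤ (I.erase (orbitF n f i)).card :=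
          Finset.card_le_card (step2.trans step3)
    _ = I.card - 1 := Finset.card_erase_of_mem hOiI
  have hIpos : 1 ≤ I.card := Finset.card_pos.mpr ⟨_, hOiI⟩
  show I'.card ≤ I.card + 1
  omega

lemma numCycles_smulS_merge (hn2 : 2 ≤ n) (hf : IsAffinePerm n f) (i : ℤ)
    (hdiff : (i+1) % (n:ℤ) ∉ orbitF n f i) :
    numCycles n (smulS n i f) + 1 ≤ numCycles n f := by
  classical
  have hn : 0 < n := by omega
  set f' := smulS n i f with hf'def
  have hf'a : IsAffinePerm n f' := smulS_affine hn2 hf i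
  set I := (Finset.range n).image (fun a : ℕ => orbitF n f (a:ℤ)) with hI
  set I' := (Finset.range n).image (fun a : ℕ => orbitF n f' (a:ℤ)) with hI'
  set a := i % (n:ℤ) with hadef
  set b := (i+1) % (n:ℤ) with hbdef
  set Ig := I'.filter (fun B => a ∉ B ∧ b ∉ B) with hIg
  have hdiff' : a ∉ orbitF n f (i+1) := by
    intro hc
    exact hdiff (orbit_symm hn hf hc)
  have hmerge : b ∈ orbitF n f' i := mem_orbit_smulS_merge hn2 hf i hdiff'
  have hO'eq : orbitF n f' (i+1) = orbitF n f' i := orbit_eq_of_mem hn hf'a hmerge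
  have step1 : I' ⊆ Ig ∪ {orbitF n f' i} := by
    intro B hB
    by_cases hai : a ∈ B
    · obtain ⟨c, _, rfl⟩ := Finset.mem_image.mp hB
      have : orbitF n f' i = orbitF n f' (c:ℤ) := orbit_eq_of_mem hn hf'a hai
      rw [Finset.mem_union]
      right
      simp [← this]
    · by_cases hbi : b ∈ B
      · obtain ⟨c, _, rfl⟩ := Finset.mem_image.mp hB
        have h1 : orbitF n f' (i+1) = orbitF n f' (c:ℤ) := orbit_eq_of_mem hn hf'a hbi
        rw [Finset.mem_union]
        right
        simp [← h1, ← hO'eq]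
      · exact Finset.mem_union_left _ (Finset.mem_filter.mpr ⟨hB, hai, hbi⟩)
  have step2 : Ig ⊆ I.filter (fun B => a ∉ B ∧ b ∉ B) := by
    intro B hB
    obtain ⟨hB', hai, hbi⟩ := Finset.mem_filter.mp hB
    obtain ⟨c, hc, rfl⟩ := Finset.mem_image.mp hB'
    have heq : orbitF n f' (c:ℤ) = orbitF n f (c:ℤ) :=
      orbit_smulS_of_avoid' hn2 hf i (c:ℤ) hai hbi
    rw [heq] at hai hbi ⊢
    exact Finset.mem_filter.mpr ⟨Finset.mem_image.mpr ⟨c, hc, rfl⟩, hai, hbi⟩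
  have hmemI : ∀ x : ℤ, orbitF n f x ∈ I := by
    intro x
    have hx0 : (0:ℤ) ≤ x % n := (emod_bounds hn x).1
    have hx1 : x % (n:ℤ) < n := (emod_bounds hn x).2
    have hcast : (((x % (n:ℤ)).toNat : ℤ)) = x % n := Int.toNat_of_nonneg hx0
    have : orbitF n f (((x % (n:ℤ)).toNat : ℤ)) = orbitF n f x := by
      apply orbit_congr hf
      rw [hcast, emod_self_emod]
    rw [← this]
    exact Finset.mem_image.mpr ⟨(x % (n:ℤ)).toNat, Finset.mem_range.mpr (by omega), rfl⟩
  have haOi : a ∈ orbitF n f i := mem_orbit_self hn i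
  have hbOi1 : b ∈ orbitF n f (i+1) := mem_orbit_self hn (i+1)
  have hOne : orbitF n f i ≠ orbitF n f (i+1) := by
    intro hc
    exact hdiff (hc ▸ hbOi1)
  have step3 : I.filter (fun B => a ∉ B ∧ b ∉ B) ⊆ I \ {orbitF n f i, orbitF n f (i+1)} := by
    intro B hB
    obtain ⟨hBI, hai, hbi⟩ := Finset.mem_filter.mp hB
    rw [Finset.mem_sdiff]
    refine ⟨hBI, ?_⟩
    intro hc
    rcases Finset.mem_insert.mp hc with h | h
    · exact hai (h ▸ haOi)
    · rw [Finset.mem_singleton] at h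
      exact hbi (h ▸ hbOi1)
  have hpairI : ({orbitF n f i, orbitF n f (i+1)} : Finset _) ⊆ I := by
    intro B hB
    rcases Finset.mem_insert.mp hB with h | h
    · exact h ▸ hmemI i
    · rw [Finset.mem_singleton] at h
      exact h ▸ hmemI (i+1)
  have hpaircard : ({orbitF n f i, orbitF n f (i+1)} : Finset _).card = 2 :=
    Finset.card_pair hOne
  have c1 : I'.card ≤ Ig.card + 1 := by
    calc I'.card ≤ (Ig ∪ {orbitF n f' i}).card := Finset.card_le_card step1
    _ ≤ Ig.card + 1 := by
        have := Finset.card_union_le Ig ({orbitF n f' i} : Finset _)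
        simpa using this
  have c2 : Ig.card ≤ I.card - 2 := by
    calc Ig.card ≤ (I \ {orbitF n f i, orbitF n f (i+1)}).card :=
          Finset.card_le_card (step2.trans step3)
    _ = I.card - 2 := by rw [Finset.card_sdiff_of_subset hpairI, hpaircard]
  have hI2 : 2 ≤ I.card := by
    calc 2 = ({orbitF n f i, orbitF n f (i+1)} : Finset _).card := hpaircard.symm
    _ ≤ I.card := Finset.card_le_card hpairI
  show I'.card + 1 ≤ I.card
  omega

/-! ### Winding number via displacement sum -/

lemma winding_sum (hn : 0 < n) (hf : IsAffinePerm n f) (hB : IsBoundedFn n f) :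
    (winding n f : ℤ) * n = ∑ i ∈ Finset.Icc (1:ℤ) (n:ℤ), (f i - i) := by
  classical
  set S := Finset.Icc (1:ℤ) (n:ℤ) with hS
  set F : ℤ → ℤ := fun i => if (n:ℤ) < f i then f i - n else f i with hF
  have hmaps : ∀ i ∈ S, F i ∈ S := by
    intro i hi
    rw [hS, Finset.mem_Icc] at hi ⊢
    have h1 := (hB i).1
    have h2 := (hB i).2
    simp only [hF]
    split_ifs with h <;> omega
  have hinj : ∀ i ∈ S, ∀ j ∈ S, F i = F j → i = j := by
    intro i hi j hj hij
    rw [hS, Finset.mem_Icc] at hi hj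
    simp only [hF] at hij
    split_ifs at hij with h1 h2 h2
    · have : f i = f j := by omega
      exact hf.1.1 this
    · have : f i = f (j + n) := by rw [hf.2]; omega
      have := hf.1.1 this
      omega
    · have : f (i + n) = f j := by rw [hf.2]; omega
      have := hf.1.1 this
      omega
    · exact hf.1.1 hij
  have himgsub : S.image F ⊆ S := Finset.image_subset_iff.mpr hmaps
  have hcard : S.card ≤ (S.image F).card := (Finset.card_image_of_injOn
    (fun i hi j hj h => hinj i hi j hj h)).symm.le
  have himg : S.image F = S := Finset.eq_of_subset_of_card_le himgsub hcard
  have hsum1 : ∑ i ∈ S, F i = ∑ i ∈ S, i := by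
    have h : ∑ x ∈ S.image F, (fun x : ℤ => x) x = ∑ x ∈ S, (fun x : ℤ => x) (F x) :=
      Finset.sum_image hinj
    rw [himg] at h
    simpa using h.symm
  have hpt : ∀ i ∈ S, f i - F i = if (n:ℤ) < f i then (n:ℤ) else 0 := by
    intro i _
    simp only [hF]
    split_ifs <;> ring
  have hfilter : ∑ i ∈ S, (if (n:ℤ) < f i then (n:ℤ) else 0)
      = ∑ i ∈ S.filter (fun i => (n:ℤ) < f i), (n:ℤ) := (Finset.sum_filter _ _).symm
  have hsum2 : ∑ i ∈ S, (f i - F i) = (winding n f : ℤ) * n := by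
    rw [Finset.sum_congr rfl hpt, hfilter, Finset.sum_const, nsmul_eq_mul]
    rfl
  have e1 : ∑ i ∈ S, (f i - F i) = ∑ i ∈ S, f i - ∑ i ∈ S, F i := Finset.sum_sub_distrib _ _
  have e2 : ∑ i ∈ S, (f i - i) = ∑ i ∈ S, f i - ∑ i ∈ S, i := Finset.sum_sub_distrib _ _
  omega

lemma sum_smulS (hn2 : 2 ≤ n) (hf : IsAffinePerm n f) {i : ℤ}
    (hi1 : 1 ≤ i) (hi2 : i ≤ (n:ℤ)) :
    ∑ j ∈ Finset.Icc (1:ℤ) (n:ℤ), smulS n i f j = ∑ j ∈ Finset.Icc (1:ℤ) (n:ℤ), f j := by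
  classical
  have hndvd : ∀ c : ℤ, 1 ≤ c → c ≤ (n:ℤ) - 1 → ¬ (n:ℤ) ∣ c := by
    intro c h1 h2 hdvd
    have := Int.le_of_dvd (by omega) hdvd
    omega
  rcases eq_or_lt_of_le hi2 with heq | hlt
  · -- i = n
    subst heq
    have hn2' : (2:ℤ) ≤ (n:ℤ) := by exact_mod_cast hn2
    have hIcc : Finset.Icc (1:ℤ) (n:ℤ) = insert 1 (insert (n:ℤ) (Finset.Icc 2 ((n:ℤ)-1))) := by
      ext x
      simp only [Finset.mem_Icc, Finset.mem_insert]
      omega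
    have h1mem : (1:ℤ) ∉ insert (n:ℤ) (Finset.Icc 2 ((n:ℤ)-1)) := by
      simp only [Finset.mem_insert, Finset.mem_Icc]
      omega
    have h2mem : (n:ℤ) ∉ Finset.Icc (2:ℤ) ((n:ℤ)-1) := by
      simp only [Finset.mem_Icc]; omega
    have hs1 : sT n (n:ℤ) 1 = 0 := by
      have e1 : (1:ℤ) % (n:ℤ) ≠ (n:ℤ) % n := by
        intro hc
        have := (cong_iff n 1 (n:ℤ)).mp hc
        exact hndvd ((n:ℤ)-1) (by omega) (by omega) this
      have e2 : (1:ℤ) % (n:ℤ) = ((n:ℤ)+1) % n := by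
        rw [cong_iff]
        exact ⟨1, by ring⟩
      rw [sT_apply_right e1 e2]
      ring
    have hsn : sT n (n:ℤ) (n:ℤ) = (n:ℤ) + 1 := sT_apply_left rfl
    have hmid : ∀ j ∈ Finset.Icc (2:ℤ) ((n:ℤ)-1), sT n (n:ℤ) j = j := by
      intro j hj
      rw [Finset.mem_Icc] at hj
      apply sT_apply_of_ne
      · intro hc
        have := (cong_iff n j (n:ℤ)).mp hc
        exact hndvd ((n:ℤ) - j) (by omega) (by omega) this
      · intro hc
        have := (cong_iff n j ((n:ℤ)+1)).mp hc
        exact hndvd ((n:ℤ) + 1 - j) (by omega) (by omega) this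
    have hf0 : f 0 = f (n:ℤ) - n := by
      have := hf.2 0
      simp only [zero_add] at this
      omega
    have hfn1 : f ((n:ℤ) + 1) = f 1 + n := by have := hf.2 1; rwa [add_comm] at this
    rw [hIcc, Finset.sum_insert h1mem, Finset.sum_insert h2mem,
        Finset.sum_insert h1mem, Finset.sum_insert h2mem]
    have hmid' : ∑ j ∈ Finset.Icc (2:ℤ) ((n:ℤ)-1), smulS n (n:ℤ) f j
        = ∑ j ∈ Finset.Icc (2:ℤ) ((n:ℤ)-1), f j := by
      apply Finset.sum_congr rfl
      intro j hj
      show f (sT n (n:ℤ) j) = f j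
      rw [hmid j hj]
    rw [hmid']
    show f (sT n (n:ℤ) 1) + (f (sT n (n:ℤ) (n:ℤ)) + _) = f 1 + (f (n:ℤ) + _)
    rw [hs1, hsn, hf0, hfn1]
    ring
  · -- i < n : sT is an involution of the interval
    have hmaps : ∀ j ∈ Finset.Icc (1:ℤ) (n:ℤ), sT n i j ∈ Finset.Icc (1:ℤ) (n:ℤ) := by
      intro j hj
      rw [Finset.mem_Icc] at hj ⊢
      by_cases e1 : j % (n:ℤ) = i % n
      · rw [sT_apply_left e1]
        -- j ≠ n since n ≡ 0 and i ∈ [1,n-1]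
        rcases eq_or_lt_of_le hj.2 with hjn | hjn
        · exfalso
          rw [hjn] at e1
          have hdv := (cong_iff n (n:ℤ) i).mp e1
          have h' : (n:ℤ) ∣ i := by
            have := dvd_add hdv (dvd_refl (n:ℤ))
            have he : i - (n:ℤ) + (n:ℤ) = i := by ring
            rwa [he] at this
          exact hndvd i hi1 (by omega) h'
        · omega
      · by_cases e2 : j % (n:ℤ) = (i+1) % n
        · rw [sT_apply_right e1 e2]
          -- j ≠ 1 since 1 ≡ i+1 would give n ∣ i
          rcases eq_or_lt_of_le hj.1 with hj1 | hj1
          · exfalso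
            rw [← hj1] at e2
            have := (cong_iff n 1 (i+1)).mp e2
            have h' : (n:ℤ) ∣ i := by simpa using this
            exact hndvd i hi1 (by omega) h'
          · omega
        · rw [sT_apply_of_ne e1 e2]
          exact hj
    apply Finset.sum_nbij' (i := fun j => sT n i j) (j := fun j => sT n i j)
    · exact hmaps
    · exact hmaps
    · intro j _; exact sT_invol hn2 i j
    · intro j _; exact sT_invol hn2 i j
    · intro j _; rfl

lemma smulS_bounded (hf : IsAffinePerm n f) (hB : IsBoundedFn n f) {i : ℤ}
    (hdesc : f (i+1) < f i) : IsBoundedFn n (smulS n i f) := by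
  intro m
  show m ≤ f (sT n i m) ∧ f (sT n i m) ≤ m + n
  by_cases h1 : m % (n:ℤ) = i % n
  · rw [sT_apply_left h1]
    have hd := (cong_iff n m i).mp h1
    have h2 : f (m+1) = f (i+1) + ((m+1) - (i+1)) := by
      apply apf_congr hf
      have he : m + 1 - (i + 1) = -(i - m) := by ring
      rw [he]
      exact dvd_neg.mpr hd
    have h3 : f i = f m + (i - m) := apf_congr hf hd
    have h4 := (hB (i+1)).1
    have h5 := (hB m).2
    omega
  · by_cases h2 : m % (n:ℤ) = (i+1) % n
    · rw [sT_apply_right h1 h2]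
      have hd := (cong_iff n m (i+1)).mp h2
      have h3 : f (m - 1) = f i + ((m-1) - i) := by
        apply apf_congr hf
        have he : m - 1 - i = -(i + 1 - m) := by ring
        rw [he]
        exact dvd_neg.mpr hd
      have h4 := (hB i).2
      have h5 := (hB (i+1)).1
      omega
    · rw [sT_apply_of_ne h1 h2]
      exact hB m

lemma winding_smulS (hn2 : 2 ≤ n) (hf : IsAffinePerm n f) (hB : IsBoundedFn n f)
    {i : ℤ} (hi1 : 1 ≤ i) (hi2 : i ≤ (n:ℤ)) (hdesc : f (i+1) < f i) :
    winding n (smulS n i f) = winding n f := by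
  have hn : 0 < n := by omega
  have hB' := smulS_bounded hf hB hdesc
  have hf' := smulS_affine hn2 hf i
  have h1 := winding_sum hn hf' hB'
  have h2 := winding_sum hn hf hB
  have e1 : ∑ j ∈ Finset.Icc (1:ℤ) (n:ℤ), (smulS n i f j - j)
      = ∑ j ∈ Finset.Icc (1:ℤ) (n:ℤ), smulS n i f j - ∑ j ∈ Finset.Icc (1:ℤ) (n:ℤ), j :=
    Finset.sum_sub_distrib _ _
  have e2 : ∑ j ∈ Finset.Icc (1:ℤ) (n:ℤ), (f j - j)
      = ∑ j ∈ Finset.Icc (1:ℤ) (n:ℤ), f j - ∑ j ∈ Finset.Icc (1:ℤ) (n:ℤ), j :=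
    Finset.sum_sub_distrib _ _
  have e3 := sum_smulS hn2 hf hi1 hi2
  have key : (winding n (smulS n i f) : ℤ) * n = (winding n f : ℤ) * n := by omega
  have hne : (n:ℤ) ≠ 0 := by positivity
  have := mul_right_cancel₀ hne key
  exact_mod_cast this

/-! ### Descents and inversions -/

lemma descent_inversion (hn : 0 < n) {i : ℤ} (h1 : 1 ≤ i) (h2 : i ≤ (n:ℤ))
    (hd : f (i+1) < f i) : (i, i+1) ∈ inversions n f := by
  unfold inversions
  rw [Finset.mem_filter, Finset.mem_product]
  refine ⟨⟨Finset.mem_Icc.mpr ⟨h1, h2⟩, Finset.mem_Icc.mpr ⟨by omega, ?_⟩⟩, by omega, hd⟩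
  have : (1:ℤ) ≤ n := by exact_mod_cast hn
  omega

lemma mono_of_no_descent (hf : IsAffinePerm n f)
    (h : ∀ i : ℤ, 1 ≤ i → i ≤ (n:ℤ) → f i < f (i+1)) (hn : 0 < n) :
    ∀ j : ℤ, f j < f (j+1) := by
  intro j
  set i := (j - 1) % (n:ℤ) + 1 with hi
  have hb := emod_bounds hn (j - 1)
  have h1 : 1 ≤ i := by omega
  have h2 : i ≤ (n:ℤ) := by omega
  have hdvd : (n:ℤ) ∣ j - i := by
    have := Int.emod_add_mul_ediv (j - 1) (n:ℤ)
    exact ⟨(j-1) / n, by omega⟩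
  have e1 : f j = f i + (j - i) := apf_congr hf hdvd
  have e2 : f (j+1) = f (i+1) + ((j+1) - (i+1)) := by
    apply apf_congr hf
    have he : j + 1 - (i + 1) = j - i := by ring
    rw [he]; exact hdvd
  have := h i h1 h2
  omega

lemma strictmono_of_step (h : ∀ j : ℤ, f j < f (j+1)) :
    ∀ p q : ℤ, p < q → f p < f q := by
  have key : ∀ m : ℕ, ∀ p : ℤ, f p < f (p + (m:ℤ) + 1) := by
    intro m
    induction m with
    | zero => intro p; simpa using h p
    | succ m ih =>
        intro p
        have h1 := ih p
        have h2 := h (p + (m:ℤ) + 1)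
        have he : p + ((m:ℕ)+1:ℕ) + 1 = (p + (m:ℤ) + 1) + 1 := by push_cast; ring
        rw [he]
        omega
  intro p q hpq
  have := key (q - p - 1).toNat p
  have he : p + ((q - p - 1).toNat : ℤ) + 1 = q := by omega
  rwa [he] at this

lemma exists_descent (hn : 0 < n) (hf : IsAffinePerm n f) (h : alen n f ≠ 0) :
    ∃ i : ℤ, 1 ≤ i ∧ i ≤ (n:ℤ) ∧ f (i+1) < f i := by
  by_contra hc
  push_neg at hc
  have hnd : ∀ i : ℤ, 1 ≤ i → i ≤ (n:ℤ) → f i < f (i+1) := by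
    intro i h1 h2
    have h3 := hc i h1 h2
    have h4 : f i ≠ f (i+1) := fun he => by
      have := hf.1.1 he
      omega
    omega
  have hmono := strictmono_of_step (mono_of_no_descent hf hnd hn)
  apply h
  unfold alen
  rw [Finset.card_eq_zero]
  rw [Finset.eq_empty_iff_forall_notMem]
  rintro ⟨p, q⟩ hm
  unfold inversions at hm
  rw [Finset.mem_filter] at hm
  exact absurd hm.2.2 (not_lt.mpr (hmono p q hm.2.1).le)

lemma alen_zero_eq_translation (hn2 : 2 ≤ n) (hf : IsAffinePerm n f)
    (ha : alen n f = 0) : ∀ j : ℤ, f j = j + f 0 := by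
  have hn : 0 < n := by omega
  have hnd : ∀ i : ℤ, 1 ≤ i → i ≤ (n:ℤ) → f i < f (i+1) := by
    intro i h1 h2
    by_contra hcon
    push_neg at hcon
    have h4 : f i ≠ f (i+1) := fun he => by
      have := hf.1.1 he
      omega
    have hdesc : f (i+1) < f i := by omega
    have := descent_inversion hn h1 h2 hdesc
    have : alen n f ≠ 0 := by
      unfold alen
      exact Finset.card_ne_zero_of_mem this
    exact this ha
  have hmono := mono_of_no_descent hf hnd hn
  have hgen : ∀ m : ℕ, ∀ j : ℤ, f j + m ≤ f (j + (m:ℤ)) := by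
    intro m
    induction m with
    | zero => intro j; simp
    | succ m ih =>
        intro j
        have h1 := ih j
        have h2 := hmono (j + (m:ℤ))
        have he : j + ((m:ℕ)+1:ℕ) = (j + (m:ℤ)) + 1 := by push_cast; ring
        rw [he]
        push_cast
        omega
  have hstep : ∀ j : ℤ, f (j+1) = f j + 1 := by
    intro j
    have hlow : f j + 1 ≤ f (j+1) := by have := hmono j; omega
    have h1 := hgen (n-1) (j+1)
    have hcast : ((n-1 : ℕ):ℤ) = (n:ℤ) - 1 := by
      rw [Nat.cast_sub (by omega : 1 ≤ n)]
      simp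
    rw [hcast] at h1
    have he : j + 1 + ((n:ℤ) - 1) = j + n := by ring
    rw [he] at h1
    have h2 : f (j + n) = f j + n := hf.2 j
    omega
  intro j
  induction j using Int.induction_on with
  | zero => omega
  | succ i ih =>
      have := hstep (i:ℤ)
      push_cast
      omega
  | pred i ih =>
      have := hstep (-(i:ℤ) - 1)
      have he : -(i:ℤ) - 1 + 1 = -(i:ℤ) := by ring
      rw [he] at this
      push_cast at ih ⊢
      omega

/-! ### Translations -/

lemma translation_iterate (c : ℤ) (r : ℕ) (x : ℤ) :
    (fun y => y + c)^[r] x = x + (r:ℤ) * c := by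
  induction r with
  | zero => simp
  | succ r ih =>
      rw [Function.iterate_succ_apply', ih]
      push_cast
      ring

lemma translation_orbit (hn : 0 < n) (k : ℕ) (x : ℤ) :
    orbitF n (fun y => y + (k:ℤ)) x
      = (Finset.Ico (0:ℤ) (n:ℤ)).filter
          (fun y => y % (Nat.gcd k n : ℤ) = x % (Nat.gcd k n : ℤ)) := by
  classical
  set d := Nat.gcd k n with hd
  have hdn : (d:ℤ) ∣ (n:ℤ) := Int.natCast_dvd_natCast.mpr (Nat.gcd_dvd_right k n)
  have hdk : (d:ℤ) ∣ (k:ℤ) := Int.natCast_dvd_natCast.mpr (Nat.gcd_dvd_left k n)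
  ext y
  simp only [orbitF, Finset.mem_image, Finset.mem_filter, Finset.mem_Ico, Finset.mem_range]
  constructor
  · rintro ⟨r, hr, rfl⟩
    rw [translation_iterate]
    refine ⟨⟨(emod_bounds hn _).1, (emod_bounds hn _).2⟩, ?_⟩
    -- (x + r*k) % n ≡ x mod d
    have h1 : (x + (r:ℤ)*(k:ℤ)) % (n:ℤ) % (n:ℤ) = (x + (r:ℤ)*(k:ℤ)) % (n:ℤ) :=
      emod_self_emod n _
    have h2 : (n:ℤ) ∣ (x + (r:ℤ)*k) - (x + (r:ℤ)*k) % n :=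
      ⟨(x + (r:ℤ)*k)/(n:ℤ), by linarith [Int.emod_add_mul_ediv (x + (r:ℤ)*k) (n:ℤ)]⟩
    rw [cong_iff]
    have h3 : (d:ℤ) ∣ (x + (r:ℤ)*k) - (x + (r:ℤ)*k) % n := dvd_trans hdn h2
    have h4 : (d:ℤ) ∣ (r:ℤ)*k := Dvd.dvd.mul_left hdk _
    have he : x - (x + (r:ℤ)*k) % n = ((x + (r:ℤ)*k) - (x + (r:ℤ)*k) % n) - (r:ℤ)*k := by
      ring
    rw [he]
    exact dvd_sub h3 h4
  · rintro ⟨⟨hy0, hy1⟩, hyd⟩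
    have hdvd : (d:ℤ) ∣ y - x := by
      rw [← cong_iff]
      exact hyd.symm ▸ hyd.symm
    obtain ⟨m, hm⟩ := (cong_iff d x y).mp hyd.symm
    have hbez := Nat.gcd_eq_gcd_ab k n
    set A := Nat.gcdA k n with hA
    set B := Nat.gcdB k n with hB
    set r₀ := (A * m) % (n:ℤ) with hr₀
    have hr₀b := emod_bounds hn (A * m)
    refine ⟨r₀.toNat, by omega, ?_⟩
    have hcast : ((r₀.toNat : ℕ) : ℤ) = r₀ := Int.toNat_of_nonneg hr₀b.1
    rw [translation_iterate, hcast]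
    -- n ∣ y - (x + r₀ * k)
    have hs := Int.emod_add_mul_ediv (A * m) (n:ℤ)
    -- r₀ = A*m - n*(A*m/n)
    have hkey : y - (x + r₀ * k) = (n:ℤ) * (((A*m)/(n:ℤ)) * k + B * m) + ((d:ℤ) - (k*A + n*B)) * m := by
      have hr : r₀ = A * m - (n:ℤ) * ((A*m)/(n:ℤ)) := by
        rw [hr₀]; linarith [Int.emod_add_mul_ediv (A*m) (n:ℤ)]
      rw [hr]
      have hy : y = x + (d:ℤ) * m := by linarith [hm]
      rw [hy]
      ring
    have hbez' : (d:ℤ) - ((k:ℤ)*A + (n:ℤ)*B) = 0 := by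
      rw [hd, hbez]
      ring
    rw [hbez', zero_mul, add_zero] at hkey
    have hdvd2 : (n:ℤ) ∣ y - (x + r₀ * k) := ⟨(((A*m)/(n:ℤ)) * k + B * m), hkey⟩
    have : (x + r₀ * k) % (n:ℤ) = y % n := (cong_iff n _ _).mpr hdvd2
    rw [this, emod_eq_self hy0 hy1]

lemma translation_numCycles (hn : 0 < n) (k : ℕ) :
    numCycles n (fun y => y + (k:ℤ)) = Nat.gcd k n := by
  classical
  set d := Nat.gcd k n with hd
  have hdpos : 0 < d := Nat.gcd_pos_of_pos_right k hn
  have hdlen : d ≤ n := Nat.le_of_dvd hn (Nat.gcd_dvd_right k n)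
  have horb : ∀ a b : ℤ, a % (d:ℤ) = b % (d:ℤ) →
      orbitF n (fun y => y + (k:ℤ)) a = orbitF n (fun y => y + (k:ℤ)) b := by
    intro a b hab
    rw [translation_orbit hn, translation_orbit hn]
    apply Finset.filter_congr
    intro y _
    rw [← hd, hab]
  have himg_eq : (Finset.range n).image (fun a : ℕ => orbitF n (fun y => y + (k:ℤ)) (a:ℤ))
      = (Finset.range d).image (fun a : ℕ => orbitF n (fun y => y + (k:ℤ)) (a:ℤ)) := by
    apply subset_antisymm
    · intro Bx hBx
      obtain ⟨c, hc, rfl⟩ := Finset.mem_image.mp hBx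
      apply Finset.mem_image.mpr
      refine ⟨c % d, Finset.mem_range.mpr (Nat.mod_lt c hdpos), ?_⟩
      show orbitF n (fun y => y + (k:ℤ)) (((c % d : ℕ)):ℤ) = orbitF n (fun y => y + (k:ℤ)) (c:ℤ)
      apply horb
      push_cast
      exact emod_self_emod d (c:ℤ)
    · intro Bx hBx
      obtain ⟨c, hc, rfl⟩ := Finset.mem_image.mp hBx
      apply Finset.mem_image.mpr
      exact ⟨c, Finset.mem_range.mpr (lt_of_lt_of_le (Finset.mem_range.mp hc) hdlen), rfl⟩
  have hinj : Set.InjOn (fun a : ℕ => orbitF n (fun y => y + (k:ℤ)) (a:ℤ))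
      (Finset.range d : Finset ℕ) := by
    intro a ha b hb hab
    simp only [Finset.coe_range, Set.mem_Iio] at ha hb
    have hab' : orbitF n (fun y => y + (k:ℤ)) (a:ℤ) = orbitF n (fun y => y + (k:ℤ)) (b:ℤ) := hab
    have hmem : (a:ℤ) ∈ orbitF n (fun y => y + (k:ℤ)) (a:ℤ) := by
      have := mem_orbit_self (f := fun y => y + (k:ℤ)) hn (a:ℤ)
      rwa [emod_eq_self (by positivity) (by exact_mod_cast lt_of_lt_of_le ha hdlen)] at this
    rw [hab', translation_orbit hn] at hmem
    have := (Finset.mem_filter.mp hmem).2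
    rw [← hd] at this
    rw [emod_eq_self (by positivity) (by exact_mod_cast ha),
        emod_eq_self (by positivity) (by exact_mod_cast hb)] at this
    exact_mod_cast this
  unfold numCycles
  rw [himg_eq, Finset.card_image_of_injOn hinj, Finset.card_range]

/-! ### Length decreases under descent multiplication -/

lemma sT_ge (i q : ℤ) : q - 1 ≤ sT n i q := by
  unfold sT
  split_ifs <;> omega

lemma sT_cong {i a b : ℤ} (h : a % (n:ℤ) = b % (n:ℤ)) :
    sT n i a % (n:ℤ) = sT n i b % (n:ℤ) := by
  by_cases h1 : a % (n:ℤ) = i % n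
  · rw [sT_apply_left h1, sT_apply_left (h ▸ h1 : b % (n:ℤ) = i % n)]
    exact cong_add n 1 h
  · by_cases h2 : a % (n:ℤ) = (i+1) % n
    · rw [sT_apply_right h1 h2, sT_apply_right (h ▸ h1) (h ▸ h2)]
      have h3 := cong_add n (-1) h
      have ha : a + (-1) = a - 1 := by ring
      have hb : b + (-1) = b - 1 := by ring
      rwa [ha, hb] at h3
    · rw [sT_apply_of_ne h1 h2, sT_apply_of_ne (h ▸ h1) (h ▸ h2)]
      exact h

lemma sT_lt (hn2 : 2 ≤ n) {i p q : ℤ} (hpq : p < q)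
    (hexc : ¬ (q = p + 1 ∧ p % (n:ℤ) = i % n)) : sT n i p < sT n i q := by
  by_cases hp1 : p % (n:ℤ) = i % n
  · rw [sT_apply_left hp1]
    by_cases hq1 : q % (n:ℤ) = i % n
    · rw [sT_apply_left hq1]; omega
    · by_cases hq2 : q % (n:ℤ) = (i+1) % n
      · rw [sT_apply_right hq1 hq2]
        have d1 := (cong_iff n p i).mp hp1
        have d2 := (cong_iff n q (i+1)).mp hq2
        have d3 : (n:ℤ) ∣ q - p - 1 := by
          have h5 := dvd_sub d1 d2
          have he : i - p - (i + 1 - q) = q - p - 1 := by ring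
          rwa [he] at h5
        have hne : q ≠ p + 1 := fun hc => hexc ⟨hc, hp1⟩
        have : (n:ℤ) ≤ q - p - 1 := Int.le_of_dvd (by omega) d3
        omega
      · rw [sT_apply_of_ne hq1 hq2]
        have hne : q ≠ p + 1 := by
          intro hc
          apply hq2
          rw [hc]
          exact cong_add n 1 hp1
        omega
  · by_cases hp2 : p % (n:ℤ) = (i+1) % n
    · rw [sT_apply_right hp1 hp2]
      have := sT_ge (n := n) i q
      omega
    · rw [sT_apply_of_ne hp1 hp2]
      by_cases hq1 : q % (n:ℤ) = i % n
      · rw [sT_apply_left hq1]; omega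
      · by_cases hq2 : q % (n:ℤ) = (i+1) % n
        · rw [sT_apply_right hq1 hq2]
          have hne : p ≠ q - 1 := by
            intro hc
            apply hp1
            rw [hc]
            have h3 := cong_add n (-1) hq2
            have ha : q + (-1) = q - 1 := by ring
            have hb : i + 1 + (-1) = i := by ring
            rwa [ha, hb] at h3
          omega
        · rw [sT_apply_of_ne hq1 hq2]; omega

lemma alen_smulS_lt (hn2 : 2 ≤ n) (hf : IsAffinePerm n f) (hB : IsBoundedFn n f)
    {i : ℤ} (hi1 : 1 ≤ i) (hi2 : i ≤ (n:ℤ)) (hdesc : f (i+1) < f i) :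
    alen n (smulS n i f) + 1 ≤ alen n f := by
  classical
  have hn : 0 < n := by omega
  have hinv : (i, i+1) ∈ inversions n f := descent_inversion hn hi1 hi2 hdesc
  set ψ : ℤ × ℤ → ℤ × ℤ := fun pq =>
    ((sT n i pq.1 - 1) % (n:ℤ) + 1,
     sT n i pq.2 - (sT n i pq.1 - ((sT n i pq.1 - 1) % (n:ℤ) + 1))) with hψ
  have key : ∀ p q : ℤ, (p, q) ∈ inversions n (smulS n i f) →
      (1 ≤ p ∧ p ≤ (n:ℤ) ∧ p < q ∧ f (sT n i q) < f (sT n i p)) ∧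
      sT n i p < sT n i q := by
    rintro p q hm
    unfold inversions at hm
    rw [Finset.mem_filter, Finset.mem_product] at hm
    obtain ⟨⟨hp, hq⟩, hpq, hfin⟩ := hm
    rw [Finset.mem_Icc] at hp hq
    have hfin' : f (sT n i q) < f (sT n i p) := hfin
    have hexc : ¬ (q = p + 1 ∧ p % (n:ℤ) = i % n) := by
      rintro ⟨rfl, hpi⟩
      have hsp : sT n i p = p + 1 := sT_apply_left hpi
      have hq2 : (p+1) % (n:ℤ) = (i+1) % n := cong_add n 1 hpi
      have hq1 : (p+1) % (n:ℤ) ≠ i % n := by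
        intro hc
        have d1 := (cong_iff n p i).mp hpi
        have d2 := (cong_iff n (p+1) i).mp hc
        have d3 : (n:ℤ) ∣ 1 := by
          have h5 := dvd_sub d1 d2
          have he : i - p - (i - (p+1)) = 1 := by ring
          rwa [he] at h5
        have := Int.le_of_dvd one_pos d3
        omega
      have hsq : sT n i (p+1) = p := by rw [sT_apply_right hq1 hq2]; ring
      rw [hsp, hsq] at hfin'
      have d1 := (cong_iff n p i).mp hpi
      have e1 : f i = f p + (i - p) := apf_congr hf d1
      have e2 : f (i+1) = f (p+1) + ((i+1) - (p+1)) := by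
        apply apf_congr hf
        have he : i + 1 - (p + 1) = i - p := by ring
        rw [he]; exact d1
      omega
    exact ⟨⟨hp.1, hp.2, hpq, hfin'⟩, sT_lt hn2 hpq hexc⟩
  have hmaps : ∀ pq ∈ inversions n (smulS n i f), ψ pq ∈ (inversions n f).erase (i, i+1) := by
    rintro ⟨p, q⟩ hm
    obtain ⟨⟨hp1, hp2, hpq, hfin⟩, hlt⟩ := key p q hm
    simp only [hψ]
    set u := sT n i p with hu
    set v := sT n i q with hv
    set u' := (u - 1) % (n:ℤ) + 1 with hu'
    have hub := emod_bounds hn (u - 1)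
    have hdvd : (n:ℤ) ∣ u - u' := by
      refine ⟨(u-1)/(n:ℤ), ?_⟩
      linarith [Int.emod_add_mul_ediv (u - 1) (n:ℤ)]
    have hu'1 : 1 ≤ u' := by omega
    have hu'2 : u' ≤ (n:ℤ) := by omega
    set v' := v - (u - u') with hv'
    have hvdvd : (n:ℤ) ∣ v - v' := by
      have he : v - v' = u - u' := by rw [hv']; ring
      rw [he]; exact hdvd
    have e1 : f u = f u' + (u - u') := apf_congr hf hdvd
    have e2 : f v = f v' + (v - v') := apf_congr hf hvdvd
    have hvv : v - v' = u - u' := by rw [hv']; ring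
    have hfv : f v' < f u' := by omega
    have hbv := (hB v').1
    have hbu := (hB u').2
    have huv' : u' < v' := by omega
    have hv'0 : 1 ≤ v' := by omega
    have hn1 : (1:ℤ) ≤ n := by exact_mod_cast hn
    have hv'3 : v' ≤ 3 * (n:ℤ) := by omega
    have hmem : (u', v') ∈ inversions n f := by
      unfold inversions
      rw [Finset.mem_filter, Finset.mem_product]
      exact ⟨⟨Finset.mem_Icc.mpr ⟨hu'1, hu'2⟩, Finset.mem_Icc.mpr ⟨hv'0, hv'3⟩⟩, huv', hfv⟩
    rw [Finset.mem_erase]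
    refine ⟨?_, hmem⟩
    intro hc
    rw [Prod.mk.injEq] at hc
    obtain ⟨hc1, hc2⟩ := hc
    have hucong : u % (n:ℤ) = i % n := by
      rw [cong_iff, ← hc1]
      have he : u' - u = -(u - u') := by ring
      rw [he]
      exact dvd_neg.mpr hdvd
    have hinvolp : sT n i u = p := by rw [hu]; exact sT_invol hn2 i p
    have hp' : p = u + 1 := by rw [← hinvolp, sT_apply_left hucong]
    have hvcong : v % (n:ℤ) = (i+1) % n := by
      rw [cong_iff]
      have he : i + 1 - v = -(v - v') := by rw [← hc2, hv']; ring
      rw [he]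
      exact dvd_neg.mpr hvdvd
    have hvne : v % (n:ℤ) ≠ i % n := by
      intro hcc
      have d1 := (cong_iff n v i).mp hcc
      have d2 := (cong_iff n v (i+1)).mp hvcong
      have d3 : (n:ℤ) ∣ 1 := by
        have h5 := dvd_sub d2 d1
        have he : i + 1 - v - (i - v) = 1 := by ring
        rwa [he] at h5
      have := Int.le_of_dvd one_pos d3
      omega
    have hinvolq : sT n i v = q := by rw [hv]; exact sT_invol hn2 i q
    have hq' : q = v - 1 := by rw [← hinvolq, sT_apply_right hvne hvcong]
    omega
  have hinj : Set.InjOn ψ (inversions n (smulS n i f)) := by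
    rintro ⟨p, q⟩ hm ⟨p', q'⟩ hm' heq
    obtain ⟨⟨hp1, hp2, hpq, _⟩, _⟩ := key p q hm
    obtain ⟨⟨hp1', hp2', hpq', _⟩, _⟩ := key p' q' hm'
    simp only [hψ, Prod.mk.injEq] at heq
    obtain ⟨e1, e2⟩ := heq
    have d1 : (n:ℤ) ∣ (sT n i p - 1) - ((sT n i p - 1) % n) :=
      ⟨(sT n i p - 1)/(n:ℤ), by linarith [Int.emod_add_mul_ediv (sT n i p - 1) (n:ℤ)]⟩
    have d2 : (n:ℤ) ∣ (sT n i p' - 1) - ((sT n i p' - 1) % n) :=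
      ⟨(sT n i p' - 1)/(n:ℤ), by linarith [Int.emod_add_mul_ediv (sT n i p' - 1) (n:ℤ)]⟩
    have hcong : sT n i p % (n:ℤ) = sT n i p' % n := by
      rw [cong_iff]
      have he : sT n i p' - sT n i p
          = ((sT n i p' - 1) - ((sT n i p' - 1) % n)) - ((sT n i p - 1) - ((sT n i p - 1) % n)) := by
        omega
      rw [he]
      exact dvd_sub d2 d1
    have hpp : p % (n:ℤ) = p' % n := by
      have h1 := sT_cong (i := i) hcong
      rwa [sT_invol hn2, sT_invol hn2] at h1
    have hpeq : p = p' := eq_of_cong_of_abs_lt hpp (by omega) (by omega)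
    subst hpeq
    have hq : sT n i q = sT n i q' := by omega
    have hqeq : q = q' := by
      have h2 := congrArg (sT n i) hq
      rwa [sT_invol hn2, sT_invol hn2] at h2
    rw [hqeq]
  have hcount := Finset.card_le_card_of_injOn ψ hmaps hinj
  rw [Finset.card_erase_of_mem hinv] at hcount
  have hpos : 0 < (inversions n f).card := Finset.card_pos.mpr ⟨_, hinv⟩
  unfold alen
  omega

/-! ### The lower bound -/

lemma translation_case (k : ℕ) (hn2 : 2 ≤ n) (hf : IsAffinePerm n f) (hB : IsBoundedFn n f)
    (ha : alen n f = 0) (hw : winding n f = k) : numCycles n f = Nat.gcd k n := by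
  have hn : 0 < n := by omega
  have htr := alen_zero_eq_translation hn2 hf ha
  set c := f 0 with hc
  have hck : c = (k:ℤ) := by
    have h1 := winding_sum hn hf hB
    have h2 : ∑ i ∈ Finset.Icc (1:ℤ) (n:ℤ), (f i - i) = ∑ _i ∈ Finset.Icc (1:ℤ) (n:ℤ), c := by
      apply Finset.sum_congr rfl
      intro i _
      rw [htr i]
      ring
    rw [h2, Finset.sum_const, nsmul_eq_mul] at h1
    have hcard : (Finset.Icc (1:ℤ) (n:ℤ)).card = n := by
      rw [Int.card_Icc]
      simp
    rw [hcard, hw] at h1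
    have hne : (n:ℤ) ≠ 0 := by positivity
    have h3 : (n:ℤ) * (k:ℤ) = (n:ℤ) * c := by linarith [h1]
    exact (mul_left_cancel₀ hne h3).symm
  have hfun : f = fun y => y + (k:ℤ) := by
    funext j
    rw [htr j, hck]
  rw [hfun]
  exact translation_numCycles hn k

lemma lower_bound_aux (k : ℕ) (hn2 : 2 ≤ n) (N : ℕ) :
    ∀ f : ℤ → ℤ, alen n f ≤ N → IsAffinePerm n f → IsBoundedFn n f →
      winding n f = k → Nat.gcd k n ≤ alen n f + numCycles n f := by
  induction N with
  | zero =>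
      intro f h0 hf hB hw
      have ha : alen n f = 0 := by omega
      rw [translation_case k hn2 hf hB ha hw, ha]
      omega
  | succ N ih =>
      intro f hle hf hB hw
      by_cases h0 : alen n f = 0
      · rw [translation_case k hn2 hf hB h0 hw, h0]
        omega
      · obtain ⟨i, hi1, hi2, hdesc⟩ := exists_descent (by omega) hf h0
        have hdec := alen_smulS_lt hn2 hf hB hi1 hi2 hdesc
        have hf' := smulS_affine hn2 hf i
        have hB' := smulS_bounded hf hB hdesc
        have hw' : winding n (smulS n i f) = k := by
          rw [winding_smulS hn2 hf hB hi1 hi2 hdesc, hw]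
        have hih := ih (smulS n i f) (by omega) hf' hB' hw'
        have hcy := numCycles_smulS_le hn2 hf i
        omega

/-! ### The minimal element -/

lemma emod_shift_eq (hn : 0 < n) {m c r : ℤ} (h : m % (n:ℤ) = r) (h2 : 0 ≤ r + c)
    (h3 : r + c < n) : (m + c) % (n:ℤ) = r + c := by
  have hb := emod_bounds hn m
  have hr : r % (n:ℤ) = r := by
    rw [← h, emod_self_emod]
  have h4 : m % (n:ℤ) = r % n := by rw [h, hr]
  have h5 := cong_add n c h4
  rw [h5, emod_eq_self h2 h3]

lemma sChain_formula (hn : 0 < n) : ∀ t : ℕ, t + 2 ≤ n → ∀ m : ℤ,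
    sChain n t m = if 1 ≤ m % (n:ℤ) ∧ m % (n:ℤ) ≤ (t:ℤ) then m + 1
      else if m % (n:ℤ) = (t:ℤ) + 1 then m - t else m := by
  intro t
  induction t with
  | zero =>
      intro _ m
      have hb := emod_bounds hn m
      show m = _
      split_ifs with h1 h2 <;> push_cast <;> omega
  | succ t ih =>
      intro ht m
      have ih' := ih (by omega)
      have hb := emod_bounds hn m
      have htn : (t:ℤ) + 2 < (n:ℤ) := by exact_mod_cast (by omega : t + 2 < n)
      show sChain n t (sT n ((t:ℤ)+1) m) = _
      have ht1 : ((t:ℤ)+1) % (n:ℤ) = (t:ℤ)+1 := emod_eq_self (by omega) (by omega)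
      have ht2 : ((t:ℤ)+1+1) % (n:ℤ) = (t:ℤ)+2 := emod_eq_self (by omega) (by omega)
      by_cases hA : m % (n:ℤ) = (t:ℤ)+1
      · have hsT : sT n ((t:ℤ)+1) m = m + 1 := sT_apply_left (by rw [hA, ht1])
        have hm1 : (m+1) % (n:ℤ) = ((t:ℤ)+1) + 1 := emod_shift_eq hn hA (by omega) (by omega)
        rw [hsT, ih', hm1]
        split_ifs <;> push_cast at * <;> omega
      · by_cases hB : m % (n:ℤ) = (t:ℤ)+2
        · have hsT : sT n ((t:ℤ)+1) m = m - 1 := sT_apply_right (by rw [hB, ht1]; omega) (by rw [hB, ht2])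
          have hm0 : (m + -1) % (n:ℤ) = ((t:ℤ)+2) + -1 := emod_shift_eq hn hB (by omega) (by omega)
          have hm1 : (m-1) % (n:ℤ) = (t:ℤ)+1 := by
            have he : m + -1 = m - 1 := by ring
            rw [he] at hm0
            rw [hm0]
            ring
          rw [hsT, ih', hm1]
          split_ifs <;> push_cast at * <;> omega
        · have hsT : sT n ((t:ℤ)+1) m = m := sT_apply_of_ne (by rw [ht1]; omega) (by rw [ht2]; omega)
          rw [hsT, ih']
          split_ifs <;> push_cast at * <;> omega

lemma gcd_facts (hk : 1 ≤ k) (hkn : k < n) :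
    1 ≤ Nat.gcd k n ∧ Nat.gcd k n ≤ k ∧ Nat.gcd k n + k ≤ n := by
  have h1 : Nat.gcd k n ∣ k := Nat.gcd_dvd_left k n
  have h2 : Nat.gcd k n ∣ n := Nat.gcd_dvd_right k n
  have h3 : Nat.gcd k n ∣ n - k := Nat.dvd_sub h2 h1
  have h4 : Nat.gcd k n ≤ n - k := Nat.le_of_dvd (by omega) h3
  have h5 : 1 ≤ Nat.gcd k n := Nat.gcd_pos_of_pos_left n (by omega)
  have h6 : Nat.gcd k n ≤ k := Nat.le_of_dvd (by omega) h1
  omega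

lemma gval (hk : 1 ≤ k) (hkn : k < n) (m : ℤ) :
    sChain n (Nat.gcd k n - 1) m + (k:ℤ)
      = if 1 ≤ m % (n:ℤ) ∧ m % (n:ℤ) ≤ (Nat.gcd k n : ℤ) - 1 then m + k + 1
        else if m % (n:ℤ) = (Nat.gcd k n : ℤ) then m + k + 1 - Nat.gcd k n
        else m + k := by
  obtain ⟨hd1, hd2, hd3⟩ := gcd_facts hk hkn
  have hn : 0 < n := by omega
  rw [sChain_formula hn (Nat.gcd k n - 1) (by omega)]
  have hcast : ((Nat.gcd k n - 1 : ℕ) : ℤ) = (Nat.gcd k n : ℤ) - 1 := by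
    rw [Nat.cast_sub (by omega : 1 ≤ Nat.gcd k n)]
    simp
  rw [hcast]
  have hb := emod_bounds hn m
  split_ifs <;> omega

lemma translation_affine (c : ℤ) : IsAffinePerm n (fun y => y + c) :=
  ⟨⟨fun a b h => by simpa using h, fun y => ⟨y - c, by ring⟩⟩, fun i => by ring⟩

lemma sChain_bijective (hn2 : 2 ≤ n) : ∀ t : ℕ, Function.Bijective (sChain n t) := by
  intro t
  induction t with
  | zero => exact Function.bijective_id
  | succ t ih =>
      have : sChain n (t+1) = (sChain n t) ∘ (sT n ((t:ℤ)+1)) := rfl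
      rw [this]
      exact ih.comp (sT_bijective hn2 _)

lemma sChain_period (t : ℕ) (m : ℤ) : sChain n t (m + (n:ℤ)) = sChain n t m + n := by
  induction t generalizing m with
  | zero => rfl
  | succ t ih =>
      show sChain n t (sT n ((t:ℤ)+1) (m + n)) = sChain n t (sT n ((t:ℤ)+1) m) + n
      rw [sT_period, ih]

lemma g_affine (hk : 1 ≤ k) (hkn : k < n) :
    IsAffinePerm n (fun m => sChain n (Nat.gcd k n - 1) m + (k:ℤ)) := by
  have hn2 : 2 ≤ n := by omega
  constructor
  · have : (fun m => sChain n (Nat.gcd k n - 1) m + (k:ℤ))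
        = (fun y => y + (k:ℤ)) ∘ (sChain n (Nat.gcd k n - 1)) := rfl
    rw [this]
    exact (translation_affine (n := n) (k:ℤ)).1.comp (sChain_bijective hn2 _)
  · intro m
    show sChain n (Nat.gcd k n - 1) (m + n) + (k:ℤ) = _
    rw [sChain_period]
    ring

lemma g_bounded (hk : 1 ≤ k) (hkn : k < n) :
    IsBoundedFn n (fun m => sChain n (Nat.gcd k n - 1) m + (k:ℤ)) := by
  obtain ⟨hd1, hd2, hd3⟩ := gcd_facts hk hkn
  intro m
  show m ≤ sChain n (Nat.gcd k n - 1) m + (k:ℤ) ∧ sChain n (Nat.gcd k n - 1) m + (k:ℤ) ≤ m + n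
  rw [gval hk hkn m]
  have hk' : (1:ℤ) ≤ (k:ℤ) := by exact_mod_cast hk
  have hkn' : (k:ℤ) < (n:ℤ) := by exact_mod_cast hkn
  have hd2' : (Nat.gcd k n : ℤ) ≤ (k:ℤ) := by exact_mod_cast hd2
  split_ifs <;> omega

lemma g_winding (hk : 1 ≤ k) (hkn : k < n) :
    winding n (fun m => sChain n (Nat.gcd k n - 1) m + (k:ℤ)) = k := by
  obtain ⟨hd1, hd2, hd3⟩ := gcd_facts hk hkn
  have hn : 0 < n := by omega
  have hd1' : (1:ℤ) ≤ (Nat.gcd k n : ℤ) := by exact_mod_cast hd1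
  have hd3' : (Nat.gcd k n : ℤ) + (k:ℤ) ≤ (n:ℤ) := by exact_mod_cast hd3
  have hk' : (1:ℤ) ≤ (k:ℤ) := by exact_mod_cast hk
  unfold winding
  have hfe : (Finset.Icc (1:ℤ) (n:ℤ)).filter
      (fun i => (n:ℤ) < (fun m => sChain n (Nat.gcd k n - 1) m + (k:ℤ)) i)
      = Finset.Icc ((n:ℤ) - k + 1) (n:ℤ) := by
    ext x
    rw [Finset.mem_filter, Finset.mem_Icc, Finset.mem_Icc]
    constructor
    · rintro ⟨⟨hx1, hx2⟩, hgt⟩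
      simp only [gval hk hkn x] at hgt
      rcases eq_or_lt_of_le hx2 with hxn | hxn
      · omega
      · have hxmod : x % (n:ℤ) = x := emod_eq_self (by omega) hxn
        rw [hxmod] at hgt
        split_ifs at hgt <;> omega
    · rintro ⟨hx1, hx2⟩
      refine ⟨⟨by omega, hx2⟩, ?_⟩
      simp only [gval hk hkn x]
      rcases eq_or_lt_of_le hx2 with hxn | hxn
      · have hxmod : x % (n:ℤ) = 0 := by rw [hxn]; exact Int.emod_self
        rw [hxmod]
        split_ifs <;> omega
      · have hxmod : x % (n:ℤ) = x := emod_eq_self (by omega) hxn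
        rw [hxmod]
        split_ifs <;> omega
  rw [hfe, Int.card_Icc]
  omega

lemma g_inversions (hk : 1 ≤ k) (hkn : k < n) :
    inversions n (fun m => sChain n (Nat.gcd k n - 1) m + (k:ℤ))
      = (Finset.Icc (1:ℤ) ((Nat.gcd k n : ℤ) - 1)).image (fun r => (r, (Nat.gcd k n : ℤ))) := by
  obtain ⟨hd1, hd2, hd3⟩ := gcd_facts hk hkn
  have hn : 0 < n := by omega
  have hd1' : (1:ℤ) ≤ (Nat.gcd k n : ℤ) := by exact_mod_cast hd1
  have hd3' : (Nat.gcd k n : ℤ) + (k:ℤ) ≤ (n:ℤ) := by exact_mod_cast hd3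
  have hk' : (1:ℤ) ≤ (k:ℤ) := by exact_mod_cast hk
  set d := (Nat.gcd k n : ℤ) with hdd
  have hdn : d % (n:ℤ) = d := emod_eq_self (by omega) (by omega)
  have trich : ∀ x : ℤ,
      (sChain n (Nat.gcd k n - 1) x + (k:ℤ) = x + k + 1 ∧ 1 ≤ x % (n:ℤ) ∧ x % (n:ℤ) ≤ d - 1)
      ∨ (sChain n (Nat.gcd k n - 1) x + (k:ℤ) = x + k + 1 - d ∧ x % (n:ℤ) = d)
      ∨ (sChain n (Nat.gcd k n - 1) x + (k:ℤ) = x + k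
          ∧ ¬(1 ≤ x % (n:ℤ) ∧ x % (n:ℤ) ≤ d - 1) ∧ x % (n:ℤ) ≠ d) := by
    intro x
    rw [gval hk hkn x, ← hdd]
    split_ifs with h1 h2
    · exact Or.inl ⟨rfl, h1⟩
    · exact Or.inr (Or.inl ⟨rfl, h2⟩)
    · exact Or.inr (Or.inr ⟨rfl, h1, h2⟩)
  ext ⟨p, q⟩
  unfold inversions
  simp only [Finset.mem_filter, Finset.mem_product, Finset.mem_Icc, Finset.mem_image,
    Prod.mk.injEq]
  constructor
  · rintro ⟨⟨⟨hp1, hp2⟩, hq1, hq2⟩, hpq, hinv⟩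
    have hinv' : sChain n (Nat.gcd k n - 1) q + (k:ℤ) < sChain n (Nat.gcd k n - 1) p + (k:ℤ) := hinv
    have hbp := emod_bounds hn p
    have hbq := emod_bounds hn q
    have hqd_of : q % (n:ℤ) = d → q < p + d → q = d := by
      intro hqm hqlt
      apply eq_of_cong_of_abs_lt (n := n) (by rw [hqm, hdn]) <;> omega
    have hpn_of : 1 ≤ p % (n:ℤ) → p < (n:ℤ) := by
      intro hge
      rcases eq_or_lt_of_le hp2 with h | h
      · rw [← h, Int.emod_self] at hge
        omega
      · exact h
    rcases trich p with ⟨hEp, hCp⟩ | ⟨hEp, hCp⟩ | ⟨hEp, hCp1, hCp2⟩ <;>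
      rcases trich q with ⟨hEq, hCq⟩ | ⟨hEq, hCq⟩ | ⟨hEq, hCq1, hCq2⟩ <;>
      rw [hEp, hEq] at hinv'
    · omega
    · -- good case
      have hqd : q = d := hqd_of hCq (by omega)
      have hpn : p < (n:ℤ) := hpn_of hCp.1
      have hpmod : p % (n:ℤ) = p := emod_eq_self (by omega) hpn
      rw [hpmod] at hCp
      exact ⟨p, ⟨hCp.1, hCp.2⟩, rfl, hqd.symm⟩
    · omega
    · omega
    · omega
    · omega
    · omega
    · exfalso
      have hqd : q = d := hqd_of hCq (by omega)
      have hpn : p < (n:ℤ) := by omega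
      have hpmod : p % (n:ℤ) = p := emod_eq_self (by omega) hpn
      rw [hpmod] at hCp1 hCp2
      omega
    · omega
  · rintro ⟨r, ⟨hr1, hr2⟩, rfl, rfl⟩
    have hrn : r % (n:ℤ) = r := emod_eq_self (by omega) (by omega)
    refine ⟨⟨⟨by omega, by omega⟩, ⟨by omega, by omega⟩⟩, by omega, ?_⟩
    show sChain n (Nat.gcd k n - 1) d + (k:ℤ) < sChain n (Nat.gcd k n - 1) r + (k:ℤ)
    have hEd : sChain n (Nat.gcd k n - 1) d + (k:ℤ) = k + 1 := by
      rcases trich d with ⟨hEd, hCd⟩ | ⟨hEd, hCd⟩ | ⟨hEd, hCd1, hCd2⟩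
      · rw [hdn] at hCd; omega
      · rw [hEd]; ring
      · rw [hdn] at hCd2; omega
    have hEr : sChain n (Nat.gcd k n - 1) r + (k:ℤ) = r + k + 1 := by
      rcases trich r with ⟨hEr, hCr⟩ | ⟨hEr, hCr⟩ | ⟨hEr, hCr1, hCr2⟩
      · exact hEr
      · rw [hrn] at hCr; omega
      · rw [hrn] at hCr1; omega
    rw [hEd, hEr]
    omega

lemma g_alen (hk : 1 ≤ k) (hkn : k < n) :
    alen n (fun m => sChain n (Nat.gcd k n - 1) m + (k:ℤ)) = Nat.gcd k n - 1 := by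
  obtain ⟨hd1, hd2, hd3⟩ := gcd_facts hk hkn
  unfold alen
  rw [g_inversions hk hkn]
  rw [Finset.card_image_of_injective _
    (fun a b h => congrArg Prod.fst h), Int.card_Icc]
  omega

/-! ### Cycle structure of the minimal element -/

lemma gt_succ_eq (t : ℕ) :
    (fun m => sChain n (t+1) m + (k:ℤ)) = smulS n ((t:ℤ)+1) (fun m => sChain n t m + (k:ℤ)) :=
  rfl

lemma gt_affine (hn2 : 2 ≤ n) (t : ℕ) : IsAffinePerm n (fun m => sChain n t m + (k:ℤ)) := by
  induction t with
  | zero => exact translation_affine (k:ℤ)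
  | succ t ih =>
      rw [gt_succ_eq]
      exact smulS_affine hn2 ih _

lemma gt_orbit (hk : 1 ≤ k) (hkn : k < n) : ∀ t : ℕ, t ≤ Nat.gcd k n - 2 → ∀ x : ℤ,
    (x % (Nat.gcd k n : ℤ) = 0 ∨ (t:ℤ) + 2 ≤ x % (Nat.gcd k n : ℤ)) →
    orbitF n (fun m => sChain n t m + (k:ℤ)) x
      = (Finset.Ico (0:ℤ) (n:ℤ)).filter
          (fun y => y % (Nat.gcd k n : ℤ) = x % (Nat.gcd k n : ℤ)) := by
  obtain ⟨hd1, hd2, hd3⟩ := gcd_facts hk hkn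
  have hn : 0 < n := by omega
  have hn2 : 2 ≤ n := by omega
  intro t
  induction t with
  | zero =>
      intro _ x _
      have he : (fun m => sChain n 0 m + (k:ℤ)) = (fun y => y + (k:ℤ)) := rfl
      rw [he]
      exact translation_orbit hn k x
  | succ t ih =>
      intro ht x hx
      have hdn' : (Nat.gcd k n : ℤ) ≤ (n:ℤ) := by exact_mod_cast (by omega : Nat.gcd k n ≤ n)
      have htD : t + 3 ≤ Nat.gcd k n := by omega
      have ht' : (t:ℤ) + 2 ≤ (Nat.gcd k n : ℤ) - 1 := by
        have h2 : ((t:ℤ)) + 3 ≤ (Nat.gcd k n : ℤ) := by exact_mod_cast htD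
        omega
      have hd3' : (Nat.gcd k n : ℤ) + (k:ℤ) ≤ (n:ℤ) := by exact_mod_cast hd3
      have hk' : (1:ℤ) ≤ (k:ℤ) := by exact_mod_cast hk
      have ihx := ih (by omega) x (by rcases hx with h | h; exact Or.inl h; exact Or.inr (by omega))
      rw [gt_succ_eq]
      have hxb := emod_bounds (show 0 < Nat.gcd k n by omega) x
      have ha : ((t:ℤ)+1) % (n:ℤ) ∉ orbitF n (fun m => sChain n t m + (k:ℤ)) x := by
        rw [emod_eq_self (by omega) (by omega), ihx]
        rw [Finset.mem_filter]
        rintro ⟨_, hmod⟩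
        rw [emod_eq_self (by omega) (by omega)] at hmod
        omega
      have hb : ((t:ℤ)+1+1) % (n:ℤ) ∉ orbitF n (fun m => sChain n t m + (k:ℤ)) x := by
        rw [emod_eq_self (by omega) (by omega), ihx]
        rw [Finset.mem_filter]
        rintro ⟨_, hmod⟩
        rw [emod_eq_self (by omega) (by omega)] at hmod
        omega
      rw [orbit_smulS_of_avoid hn (gt_affine hn2 t) _ x ha hb]
      exact ihx

lemma gt_numCycles_le (hk : 1 ≤ k) (hkn : k < n) : ∀ t : ℕ, t ≤ Nat.gcd k n - 1 →
    numCycles n (fun m => sChain n t m + (k:ℤ)) + t ≤ Nat.gcd k n := by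
  obtain ⟨hd1, hd2, hd3⟩ := gcd_facts hk hkn
  have hn : 0 < n := by omega
  have hn2 : 2 ≤ n := by omega
  intro t
  induction t with
  | zero =>
      intro _
      have he : (fun m => sChain n 0 m + (k:ℤ)) = (fun y => y + (k:ℤ)) := rfl
      rw [he, translation_numCycles hn k]
      omega
  | succ t ih =>
      intro ht
      have hdg2 : 2 ≤ Nat.gcd k n := by omega
      have ht2 : t ≤ Nat.gcd k n - 2 := by omega
      have hdn' : (Nat.gcd k n : ℤ) ≤ (n:ℤ) := by exact_mod_cast (by omega : Nat.gcd k n ≤ n)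
      have htD : t + 2 ≤ Nat.gcd k n := by omega
      have ht' : (t:ℤ) + 2 ≤ (Nat.gcd k n : ℤ) := by exact_mod_cast htD
      have hd3' : (Nat.gcd k n : ℤ) + (k:ℤ) ≤ (n:ℤ) := by exact_mod_cast hd3
      have hk' : (1:ℤ) ≤ (k:ℤ) := by exact_mod_cast hk
      -- the orbit of t+2 under g_t is its pure congruence class
      have hxcond : (((t:ℤ)+2) % (Nat.gcd k n : ℤ) = 0 ∨ (t:ℤ) + 2 ≤ ((t:ℤ)+2) % (Nat.gcd k n : ℤ)) := by
        rcases eq_or_lt_of_le ht' with h | h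
        · left
          rw [h, Int.emod_self]
        · right
          rw [emod_eq_self (by omega) h]
      have horb := gt_orbit hk hkn t ht2 ((t:ℤ)+2) hxcond
      have hdiff : (((t:ℤ)+1)+1) % (n:ℤ) ∉ orbitF n (fun m => sChain n t m + (k:ℤ)) ((t:ℤ)+1) := by
        intro hmem
        have hsymm := orbit_symm hn (gt_affine hn2 t) (x := ((t:ℤ)+1)) (y := ((t:ℤ)+1)+1) hmem
        have he : ((t:ℤ)+1)+1 = (t:ℤ)+2 := by ring
        rw [he] at hsymm
        rw [horb, Finset.mem_filter] at hsymm
        obtain ⟨_, hmod⟩ := hsymm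
        rw [emod_eq_self (a := (t:ℤ)+1) (n := n) (by omega) (by omega)] at hmod
        have hL : ((t:ℤ)+1) % (Nat.gcd k n : ℤ) = (t:ℤ)+1 :=
          emod_eq_self (by omega) (by omega)
        rw [hL] at hmod
        rcases eq_or_lt_of_le ht' with h | h
        · rw [h, Int.emod_self] at hmod
          omega
        · rw [emod_eq_self (by omega) h] at hmod
          omega
      have hmerge := numCycles_smulS_merge hn2 (gt_affine hn2 t) ((t:ℤ)+1) hdiff
      have hih := ih (by omega)
      rw [gt_succ_eq]
      omega

lemma numCycles_pos (hn : 0 < n) : 1 ≤ numCycles n f := by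
  apply Finset.card_pos.mpr
  exact ⟨orbitF n f ((0:ℕ):ℤ), Finset.mem_image.mpr ⟨0, Finset.mem_range.mpr hn, rfl⟩⟩

lemma cyclemod_of_numCycles_one (hn : 0 < n) (hf : IsAffinePerm n f)
    (h : numCycles n f = 1) : IsCycleMod n f := by
  intro j
  have hb := emod_bounds hn j
  set c := (j % (n:ℤ)).toNat with hc
  have hcast : ((c:ℕ):ℤ) = j % n := Int.toNat_of_nonneg hb.1
  have hmem0 : orbitF n f ((0:ℕ):ℤ) ∈ (Finset.range n).image (fun a : ℕ => orbitF n f (a:ℤ)) :=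
    Finset.mem_image.mpr ⟨0, Finset.mem_range.mpr hn, rfl⟩
  have hmemc : orbitF n f ((c:ℕ):ℤ) ∈ (Finset.range n).image (fun a : ℕ => orbitF n f (a:ℤ)) :=
    Finset.mem_image.mpr ⟨c, Finset.mem_range.mpr (by omega), rfl⟩
  have heq : orbitF n f ((c:ℕ):ℤ) = orbitF n f ((0:ℕ):ℤ) :=
    Finset.card_le_one.mp (le_of_eq h) _ hmemc _ hmem0
  have hjmem : j % (n:ℤ) ∈ orbitF n f ((c:ℕ):ℤ) := by
    have hmm := mem_orbit_self (f := f) hn ((c:ℕ):ℤ)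
    have he : ((c:ℕ):ℤ) % (n:ℤ) = j % (n:ℤ) := by rw [hcast, emod_self_emod]
    rwa [he] at hmm
  rw [heq] at hjmem
  simp only [orbitF, Finset.mem_image, Finset.mem_range] at hjmem
  obtain ⟨r, hr, heq'⟩ := hjmem
  exact ⟨r, hr, by simpa using heq'⟩

lemma numCycles_one_of_cyclemod (hn : 0 < n) (hf : IsAffinePerm n f)
    (h : IsCycleMod n f) : numCycles n f = 1 := by
  have hle : numCycles n f ≤ 1 := by
    apply Finset.card_le_one.mpr
    intro a ha b hb
    obtain ⟨ca, _, rfl⟩ := Finset.mem_image.mp ha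
    obtain ⟨cb, _, rfl⟩ := Finset.mem_image.mp hb
    have key : ∀ c : ℕ, orbitF n f ((c:ℕ):ℤ) = orbitF n f 0 := by
      intro c
      obtain ⟨r, hr, heq⟩ := h ((c:ℕ):ℤ)
      have hmem : ((c:ℕ):ℤ) % (n:ℤ) ∈ orbitF n f 0 := by
        simp only [orbitF, Finset.mem_image, Finset.mem_range]
        exact ⟨r, hr, heq⟩
      exact orbit_eq_of_mem hn hf hmem
    rw [key ca, key cb]
  have := numCycles_pos (f := f) hn
  omega

lemma g_cyclemod (hk : 1 ≤ k) (hkn : k < n) :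
    IsCycleMod n (fun m => sChain n (Nat.gcd k n - 1) m + (k:ℤ)) := by
  obtain ⟨hd1, hd2, hd3⟩ := gcd_facts hk hkn
  have hn : 0 < n := by omega
  have hn2 : 2 ≤ n := by omega
  apply cyclemod_of_numCycles_one hn (gt_affine hn2 _)
  have h1 := gt_numCycles_le hk hkn (Nat.gcd k n - 1) le_rfl
  have h2 := numCycles_pos (f := (fun m => sChain n (Nat.gcd k n - 1) m + (k:ℤ))) hn
  omega

end P5

/-- Every `f ∈ Θ_{k,n}` has `ℓ(f) ≥ gcd(k,n) - 1`, and the bound is attained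
by `f_{k,n} s_1 s_2 ⋯ s_{gcd(k,n)-1} ∈ Θ_{k,n}`, where `f_{k,n}(i) = i + k`. -/
theorem positroid_stmt5 (k n : ℕ) (hk : 1 ≤ k) (hkn : k < n) :
    (∀ f : ℤ → ℤ, IsTheta k n f → Nat.gcd k n - 1 ≤ alen n f) ∧
    IsTheta k n (fun m => sChain n (Nat.gcd k n - 1) m + (k : ℤ)) ∧
    alen n (fun m => sChain n (Nat.gcd k n - 1) m + (k : ℤ)) = Nat.gcd k n - 1 := by
  have hn2 : 2 ≤ n := by omega
  refine ⟨?_, ⟨⟨P5.g_affine hk hkn, P5.g_bounded hk hkn⟩, P5.g_cyclemod hk hkn,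
    P5.g_winding hk hkn⟩, P5.g_alen hk hkn⟩
  rintro f ⟨⟨hf, hB⟩, hcyc, hw⟩
  have h1 := P5.numCycles_one_of_cyclemod (by omega) hf hcyc
  have h2 := P5.lower_bound_aux k hn2 (alen n f) f le_rfl hf hB hw
  omega
end

section
/- Let f ∈ Θ_{k,n} and let (i,j) be an inversion of f. Then the permutation f̄^{(i,j)} ∈ S_n, obtained from f̄ by swapping the values at positions i mod n and j mod n, is a product of exactly two disjoint cycles. -/
open Finset

lemma per_ext {n : ℕ} {u : ℤ → ℤ} (h : ∀ m : ℤ, u (m + (n:ℤ)) = u m + (n:ℤ)) :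
    ∀ (m c : ℤ), u (m + c * (n:ℤ)) = u m + c * (n:ℤ) := by
  intro m c
  induction c using Int.induction_on with
  | zero => simp
  | succ k ih =>
      have e1 : m + ((k:ℤ) + 1) * n = (m + k * n) + n := by ring
      rw [e1, h, ih]; ring
  | pred k ih =>
      have e1 : m + (-(k:ℤ) - 1) * n + n = m + -(k:ℤ) * n := by ring
      have := h (m + (-(k:ℤ) - 1) * n)
      rw [e1, ih] at this
      linarith

/-- reduction of u mod n -/
def redMod (n : ℕ) (u : ℤ → ℤ) : ZMod n → ZMod n := fun x => ((u (x.val : ℤ) : ℤ) : ZMod n)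

lemma redMod_cast {n : ℕ} [NeZero n] {u : ℤ → ℤ}
    (h : ∀ m : ℤ, u (m + (n:ℤ)) = u m + (n:ℤ)) (m : ℤ) :
    ((u m : ℤ) : ZMod n) = redMod n u ((m : ZMod n)) := by
  have hval : (((m : ZMod n).val : ℤ)) = m % n := ZMod.val_intCast m
  have h2 : m = (((m : ZMod n).val : ℤ)) + (m / n) * n := by
    rw [hval]; linarith [Int.emod_add_ediv_mul m (n:ℤ)]
  have h3 : u m = u (((m : ZMod n).val : ℤ)) + (m / n) * n := by
    conv_lhs => rw [h2]
    exact per_ext h _ _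
  have hz : (((n:ℤ)) : ZMod n) = 0 := by push_cast; simp
  rw [h3]; push_cast [redMod]
  simp [ZMod.natCast_self]

lemma redMod_iterate {n : ℕ} [NeZero n] {u : ℤ → ℤ}
    (h : ∀ m : ℤ, u (m + (n:ℤ)) = u m + (n:ℤ)) (r : ℕ) (m : ℤ) :
    ((u^[r] m : ℤ) : ZMod n) = (redMod n u)^[r] ((m : ZMod n)) := by
  induction r with
  | zero => simp
  | succ r ih =>
      rw [Function.iterate_succ_apply', Function.iterate_succ_apply',
        redMod_cast h, ih]

lemma orbitF_eq {n : ℕ} [NeZero n] {u : ℤ → ℤ}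
    (h : ∀ m : ℤ, u (m + (n:ℤ)) = u m + (n:ℤ)) (m : ℤ) :
    orbitF n u m =
      ((Finset.range n).image (fun r => (redMod n u)^[r] ((m : ZMod n)))).image
        (fun z : ZMod n => (z.val : ℤ)) := by
  rw [Finset.image_image]
  unfold orbitF
  apply Finset.image_congr
  intro r _
  show u^[r] m % (n:ℤ) = _
  rw [← ZMod.val_intCast (u^[r] m), redMod_iterate h]
  rfl

/-- general orbit computation for a cyclically-permuted list -/
lemma cyclic_orbit {α : Type*} [DecidableEq α] (e : α → α) (ψ : ℕ → α) (L n : ℕ) (hL : 0 < L) (hLn : L ≤ n)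
    (hstep : ∀ m < L, e (ψ m) = ψ ((m + 1) % L)) :
    ∀ m0 < L, (Finset.range n).image (fun r => e^[r] (ψ m0)) = (Finset.range L).image ψ := by
  intro m0 hm0
  have key : ∀ r : ℕ, e^[r] (ψ m0) = ψ ((m0 + r) % L) := by
    intro r
    induction r with
    | zero => simp [Nat.mod_eq_of_lt hm0]
    | succ r ih =>
        rw [Function.iterate_succ_apply', ih, hstep _ (Nat.mod_lt _ hL)]
        congr 1
        rw [Nat.mod_add_mod]
        ring_nf
  ext y
  simp only [Finset.mem_image, Finset.mem_range]
  constructor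
  · rintro ⟨r, _, rfl⟩
    exact ⟨(m0 + r) % L, Nat.mod_lt _ hL, (key r).symm⟩
  · rintro ⟨m, hm, rfl⟩
    refine ⟨(L + m - m0) % L, lt_of_lt_of_le (Nat.mod_lt _ hL) hLn, ?_⟩
    rw [key]
    congr 1
    rw [Nat.add_mod_mod]
    have : m0 + (L + m - m0) = L + m := by omega
    rw [this, Nat.add_comm L m, Nat.add_mod_right, Nat.mod_eq_of_lt hm]

lemma mod_two_helper (n x : ℕ) (hn : 0 < n) (hx : x < 2*n) :
    x % n = if x < n then x else x - n := by
  split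
  · exact Nat.mod_eq_of_lt ‹_›
  · rw [Nat.mod_eq_sub_mod (by omega), Nat.mod_eq_of_lt (by omega)]

lemma aux_two_cycles (n : ℕ) [NeZero n] (χ π : ZMod n → ZMod n)
    (hcyc : ∀ y : ZMod n, ∃ u, u < n ∧ χ^[u] (0:ZMod n) = y)
    (hinj : Function.Injective χ)
    (a b : ZMod n) (hab : a ≠ b)
    (hπa : π a = χ b) (hπb : π b = χ a) (hπ : ∀ x, x ≠ a → x ≠ b → π x = χ x)
    (s t : ℕ) (hs : χ^[s] (0:ZMod n) = a) (ht : χ^[t] (0:ZMod n) = b)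
    (hst : s < t) (htn : t < n) :
    ((Finset.univ : Finset (ZMod n)).image
      (fun x => (Finset.range n).image (fun r => π^[r] x))).card = 2 := by
  have hn : 0 < n := Nat.pos_of_ne_zero (NeZero.ne n)
  set w : ℕ → ZMod n := fun u => χ^[u] (0:ZMod n) with hw
  have hwstep : ∀ u, χ (w u) = w (u + 1) := by
    intro u; rw [hw]; exact (Function.iterate_succ_apply' χ u 0).symm
  -- injectivity of w on range n
  have himg : (Finset.range n).image w = Finset.univ := by
    apply Finset.eq_univ_of_forall
    intro y
    obtain ⟨u, hu, hy⟩ := hcyc y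
    exact Finset.mem_image.mpr ⟨u, Finset.mem_range.mpr hu, hy⟩
  have hwInjOn : Set.InjOn w (Finset.range n) := by
    apply Finset.injOn_of_card_image_eq
    rw [himg, Finset.card_univ, ZMod.card, Finset.card_range]
  have hwinj : ∀ u v, u < n → v < n → w u = w v → u = v := by
    intro u v hu hv h
    exact hwInjOn (by simpa using hu) (by simpa using hv) h
  -- χ^[n] 0 = 0
  have hwn : w n = w 0 := by
    obtain ⟨r, hr, hrw⟩ := hcyc (w n)
    rcases Nat.eq_zero_or_pos r with rfl | hrpos
    · exact hrw.symm
    · exfalso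
      have hd : χ^[r] (χ^[n - r] (0:ZMod n)) = χ^[r] (0:ZMod n) := by
        rw [← Function.iterate_add_apply]
        have : r + (n - r) = n := by omega
        rw [this]; exact hrw.symm ▸ rfl
      have h0 : χ^[n - r] (0:ZMod n) = 0 := (hinj.iterate r) hd
      have : w (n - r) = w 0 := h0
      have := hwinj (n - r) 0 (by omega) hn this
      omega
  have hwper : ∀ u, w (u + n) = w u := by
    intro u
    show χ^[u + n] 0 = χ^[u] 0
    rw [Function.iterate_add_apply]
    exact congrArg _ (hwn : χ^[n] (0:ZMod n) = 0)
  have hwmod : ∀ u, w u = w (u % n) := by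
    have key : ∀ q r, w (r + n * q) = w r := by
      intro q
      induction q with
      | zero => simp
      | succ q ih =>
          intro r
          have : r + n * (q + 1) = (r + n * q) + n := by ring
          rw [this, hwper, ih]
    intro u
    conv_lhs => rw [← Nat.mod_add_div u n]
    exact key _ _
  have hsn : s < n := lt_trans hst htn
  -- the two cycles
  set LA := t - s with hLA
  set LB := n - t + s with hLB
  have hLApos : 0 < LA := by omega
  have hLAn : LA ≤ n := by omega
  have hLBpos : 0 < LB := by omega
  have hLBn : LB ≤ n := by omega
  set ψA : ℕ → ZMod n := fun m => w (s + 1 + m) with hψA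
  set ψB : ℕ → ZMod n := fun m => w ((t + 1 + m) % n) with hψB
  have hstepA : ∀ m < LA, π (ψA m) = ψA ((m + 1) % LA) := by
    intro m hm
    by_cases hmt : m + 1 = LA
    · have h1 : ψA m = b := by
        rw [hψA, ← ht]; show w (s+1+m) = w t; congr 1; omega
      have h2 : (m + 1) % LA = 0 := by rw [hmt, Nat.mod_self]
      rw [h1, hπb, ← hs, h2]
      show χ (w s) = w (s + 1 + 0)
      rw [hwstep]
    · have hna : ψA m ≠ a := by
        intro h
        have := hwinj (s+1+m) s (by omega) hsn (h.trans hs.symm)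
        omega
      have hnb : ψA m ≠ b := by
        intro h
        have := hwinj (s+1+m) t (by omega) htn (h.trans ht.symm)
        omega
      rw [hπ _ hna hnb, hψA]
      show χ (w (s+1+m)) = w (s + 1 + (m+1) % LA)
      rw [hwstep, Nat.mod_eq_of_lt (show m + 1 < LA by omega),
        show s + 1 + (m + 1) = s + 1 + m + 1 from by omega]
  have hstepB : ∀ m < LB, π (ψB m) = ψB ((m + 1) % LB) := by
    intro m hm
    have hub : t + 1 + m < 2 * n := by omega
    have hsplit := mod_two_helper n (t+1+m) hn hub
    by_cases hmt : m + 1 = LB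
    · have h1 : ψB m = a := by
        rw [hψB, ← hs]; show w ((t+1+m) % n) = w s
        congr 1
        rw [hsplit]; split <;> omega
      have h2 : (m + 1) % LB = 0 := by rw [hmt, Nat.mod_self]
      rw [h1, hπa, ← ht, h2]
      show χ (w t) = w ((t + 1 + 0) % n)
      rw [hwstep, hwmod (t+1)]
    · have hidx : (t+1+m) % n < n := Nat.mod_lt _ hn
      have hna : ψB m ≠ a := by
        intro h
        have := hwinj ((t+1+m) % n) s hidx hsn (h.trans hs.symm)
        rw [hsplit] at this; revert this; split <;> omega
      have hnb : ψB m ≠ b := by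
        intro h
        have := hwinj ((t+1+m) % n) t hidx htn (h.trans ht.symm)
        rw [hsplit] at this; revert this; split <;> omega
      rw [hπ _ hna hnb, hψB]
      show χ (w ((t+1+m) % n)) = w ((t + 1 + (m+1) % LB) % n)
      rw [hwstep, hwmod ((t+1+m) % n + 1), Nat.mod_add_mod,
        Nat.mod_eq_of_lt (show m + 1 < LB by omega),
        show t + 1 + (m + 1) = t + 1 + m + 1 from by omega]
  set A := (Finset.range LA).image ψA with hA
  set B := (Finset.range LB).image ψB with hB
  have OA : ∀ m0 < LA, (Finset.range n).image (fun r => π^[r] (ψA m0)) = A :=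
    cyclic_orbit π ψA LA n hLApos hLAn hstepA
  have OB : ∀ m0 < LB, (Finset.range n).image (fun r => π^[r] (ψB m0)) = B :=
    cyclic_orbit π ψB LB n hLBpos hLBn hstepB
  have cover : ∀ x : ZMod n,
      (Finset.range n).image (fun r => π^[r] x) = A ∨
      (Finset.range n).image (fun r => π^[r] x) = B := by
    intro x
    obtain ⟨u, hu, hx⟩ := hcyc x
    have hx' : x = w u := hx.symm
    subst hx'
    rcases lt_or_ge s u with h1 | h1
    · rcases le_or_gt u t with h2 | h2
      · left
        have he : w u = ψA (u - s - 1) := by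
          rw [hψA]; congr 1; omega
        rw [he]; exact OA _ (by omega)
      · right
        have he : w u = ψB (u - t - 1) := by
          rw [hψB]; congr 1
          rw [Nat.mod_eq_of_lt (by omega)]; omega
        rw [he]; exact OB _ (by omega)
    · right
      have he : w u = ψB (n + u - t - 1) := by
        rw [hψB]; congr 1
        rw [mod_two_helper n _ hn (by omega)]
        split <;> omega
      rw [he]; exact OB _ (by omega)
  have hAB : A ≠ B := by
    intro h
    have hmemA : ψA 0 ∈ A := Finset.mem_image.mpr ⟨0, Finset.mem_range.mpr hLApos, rfl⟩
    rw [h, hB] at hmemA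
    obtain ⟨m, hm, hmeq⟩ := Finset.mem_image.mp hmemA
    rw [Finset.mem_range] at hm
    have : (t+1+m) % n = s + 1 :=
      hwinj _ _ (Nat.mod_lt _ hn) (by omega) hmeq
    rw [mod_two_helper n _ hn (by omega)] at this
    revert this; split <;> omega
  have himage : (Finset.univ : Finset (ZMod n)).image
      (fun x => (Finset.range n).image (fun r => π^[r] x)) = {A, B} := by
    apply Finset.Subset.antisymm
    · intro X hX
      obtain ⟨x, _, hx⟩ := Finset.mem_image.mp hX
      rcases cover x with h | h <;> simp [← hx, h]
    · intro X hX
      rcases Finset.mem_insert.mp hX with rfl | hX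
      · exact Finset.mem_image.mpr ⟨ψA 0, Finset.mem_univ _, OA 0 hLApos⟩
      · rw [Finset.mem_singleton] at hX
        subst hX
        exact Finset.mem_image.mpr ⟨ψB 0, Finset.mem_univ _, OB 0 hLBpos⟩
  rw [himage, Finset.card_pair hAB]

/-- For `f ∈ Θ_{k,n}` and an inversion `(i,j)` of `f`, the permutation
obtained by resolving the crossing is a product of exactly two disjoint cycles. -/
theorem positroid_stmt6 (k n : ℕ) (f : ℤ → ℤ) (hf : IsTheta k n f) (i j : ℤ)
    (hij : (i, j) ∈ inversions n f) :
    numCycles n (resolve n f i j) = 2 := by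
  obtain ⟨⟨⟨hbij, fper⟩, -⟩, fcyc, -⟩ := hf
  simp only [inversions, Finset.mem_filter, Finset.mem_product, Finset.mem_Icc] at hij
  obtain ⟨⟨⟨hi1, hin⟩, -, -⟩, hlt, hfij⟩ := hij
  have key : ((Finset.range n).image (fun a : ℕ => orbitF n (fun m =>
      if m % (n:ℤ) = i % (n:ℤ) then f j + (m - i)
      else if m % (n:ℤ) = j % (n:ℤ) then f i + (m - j)
      else f m) (a : ℤ))).card = 2 := by
    have hn : 0 < n := by omega
    haveI : NeZero n := ⟨hn.ne'⟩
    obtain ⟨finj, -⟩ := hbij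
    set g : ℤ → ℤ := fun m =>
        if m % (n:ℤ) = i % (n:ℤ) then f j + (m - i)
        else if m % (n:ℤ) = j % (n:ℤ) then f i + (m - j)
        else f m with hg
    -- i and j are in different residue classes
    have hmod : i % (n:ℤ) ≠ j % (n:ℤ) := by
      intro h
      obtain ⟨c, hc⟩ := (Int.ModEq.dvd (h : Int.ModEq (n:ℤ) i j) : (n:ℤ) ∣ j - i)
      have hc0 : 0 < c := by
        rcases le_or_gt c 0 with h' | h'
        · nlinarith
        · exact h'
      have : f j = f i + c * n := by
        have : j = i + c * (n:ℤ) := by linarith [mul_comm (n:ℤ) c]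
        rw [this, per_ext fper]
      nlinarith
    -- g is n-periodic
    have hgper : ∀ m : ℤ, g (m + (n:ℤ)) = g m + (n:ℤ) := by
      intro m
      have h1 : (m + (n:ℤ)) % n = m % n := by
        simpa using Int.add_mul_emod_self_left (a := m) (b := (n:ℤ)) (c := 1)
      rw [hg]
      simp only [h1]
      split_ifs with h2 h3
      · ring
      · ring
      · exact fper m
    -- g is injective
    set τ : ℤ → ℤ := fun m =>
        if m % (n:ℤ) = i % (n:ℤ) then m + (j - i)
        else if m % (n:ℤ) = j % (n:ℤ) then m - (j - i) else m with hτ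
    have modshift : ∀ m c : ℤ, (m + c * (n:ℤ)) % n = m % n := fun m c =>
      Int.add_mul_emod_self_right _ _ _
    have hmove : ∀ m a b : ℤ, m % (n:ℤ) = a % (n:ℤ) → (m + (b - a)) % (n:ℤ) = b % (n:ℤ) := by
      intro m a b h
      have : Int.ModEq (n:ℤ) (m + (b - a)) (a + (b - a)) :=
        Int.ModEq.add_right _ (h : Int.ModEq (n:ℤ) m a)
      have h2 : (m + (b - a)) % (n:ℤ) = (a + (b - a)) % (n:ℤ) := this
      rw [h2]; congr 1; ring
    have hgτ : ∀ m, g m = f (τ m) := by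
      intro m
      simp only [hg, hτ]
      split_ifs with h1 h2
      · obtain ⟨c, hc⟩ := (Int.ModEq.dvd (h1.symm : Int.ModEq (n:ℤ) i m) : (n:ℤ) ∣ m - i)
        have he : m + (j - i) = j + c * (n:ℤ) := by linarith [mul_comm (n:ℤ) c]
        rw [he, per_ext fper]
        linarith [mul_comm (n:ℤ) c]
      · obtain ⟨c, hc⟩ := (Int.ModEq.dvd (h2.symm : Int.ModEq (n:ℤ) j m) : (n:ℤ) ∣ m - j)
        have he : m - (j - i) = i + c * (n:ℤ) := by linarith [mul_comm (n:ℤ) c]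
        rw [he, per_ext fper]
        linarith [mul_comm (n:ℤ) c]
      · rfl
    have hτinv : ∀ m, τ (τ m) = m := by
      intro m
      rw [hτ]
      by_cases h1 : m % (n:ℤ) = i % (n:ℤ)
      · simp only [if_pos h1]
        have h2 : (m + (j - i)) % (n:ℤ) = j % (n:ℤ) := hmove m i j h1
        rw [if_neg (by rw [h2]; exact fun h => hmod h.symm), if_pos h2]
        ring
      · simp only [if_neg h1]
        by_cases h2 : m % (n:ℤ) = j % (n:ℤ)
        · simp only [if_pos h2]
          have h3 : (m - (j - i)) % (n:ℤ) = i % (n:ℤ) := by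
            have := hmove m j i h2
            rw [show m + (i - j) = m - (j - i) from by ring] at this
            exact this
          rw [if_pos h3]
          ring
        · simp only [if_neg h2, if_neg h1, if_neg h2]
    have hginj : Function.Injective g := by
      intro x y hxy
      rw [hgτ, hgτ] at hxy
      have := finj hxy
      calc x = τ (τ x) := (hτinv x).symm
      _ = τ (τ y) := by rw [this]
      _ = y := hτinv y
    -- reductions mod n
    set χ : ZMod n → ZMod n := redMod n f with hχ
    set π : ZMod n → ZMod n := redMod n g with hπdef
    have hval : ∀ x : ZMod n, (((x.val : ℤ)) : ZMod n) = x := by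
      intro x; push_cast; exact ZMod.natCast_rightInverse x
    have hcastinj : ∀ m m' : ℤ, ((m : ZMod n) = (m' : ZMod n)) ↔ m % n = m' % n :=
      fun m m' => ZMod.intCast_eq_intCast_iff' m m' n
    have hχinj : Function.Injective χ := by
      intro x y h
      have h2 : ((f (x.val : ℤ) : ℤ) : ZMod n) = ((f (y.val : ℤ) : ℤ) : ZMod n) := h
      rw [hcastinj] at h2
      obtain ⟨c, hc⟩ := (Int.ModEq.dvd (h2 : Int.ModEq (n:ℤ) _ _) :
        (n:ℤ) ∣ f (y.val : ℤ) - f (x.val : ℤ))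
      have : f ((y.val : ℤ)) = f ((x.val : ℤ) + c * n) := by
        rw [per_ext fper]; linarith [mul_comm (n:ℤ) c]
      have h3 := finj this
      have h4 : ((y.val : ℤ) : ZMod n) = (((x.val : ℤ) + c * n : ℤ) : ZMod n) := by rw [h3]
      rw [hcastinj, modshift] at h4
      rw [← hval x, ← hval y, hcastinj]
      exact h4.symm
    have hcyc : ∀ y : ZMod n, ∃ u, u < n ∧ χ^[u] (0:ZMod n) = y := by
      intro y
      obtain ⟨r, hr, heq⟩ := fcyc (y.val : ℤ)
      refine ⟨r, hr, ?_⟩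
      have h2 : ((f^[r] 0 : ℤ) : ZMod n) = (((y.val : ℤ)) : ZMod n) := by
        rw [hcastinj]; exact heq
      rw [redMod_iterate fper, hval] at h2
      simpa using h2
    set a : ZMod n := ((i : ZMod n)) with ha
    set b : ZMod n := ((j : ZMod n)) with hb
    have hab : a ≠ b := by rw [ha, hb, Ne, hcastinj]; exact hmod
    have hπa : π a = χ b := by
      have h1 : ((g i : ℤ) : ZMod n) = π a := redMod_cast hgper i
      have h2 : g i = f j := by rw [hg]; simp
      rw [h2] at h1
      rw [← h1, redMod_cast fper j]
    have hπb : π b = χ a := by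
      have h1 : ((g j : ℤ) : ZMod n) = π b := redMod_cast hgper j
      have h2 : g j = f i := by
        show (if j % (n:ℤ) = i % (n:ℤ) then f j + (j - i)
          else if j % (n:ℤ) = j % (n:ℤ) then f i + (j - j) else f j) = f i
        rw [if_neg (fun h : j % (n:ℤ) = i % (n:ℤ) => hmod h.symm), if_pos rfl]
        ring
      rw [h2] at h1
      rw [← h1, redMod_cast fper i]
    have hπx : ∀ x : ZMod n, x ≠ a → x ≠ b → π x = χ x := by
      intro x hxa hxb
      have h1 : ¬ ((x.val : ℤ) % n = i % (n:ℤ)) := by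
        intro h
        exact hxa (by rw [← hval x, ha, hcastinj]; exact h)
      have h2 : ¬ ((x.val : ℤ) % n = j % (n:ℤ)) := by
        intro h
        exact hxb (by rw [← hval x, hb, hcastinj]; exact h)
      have h3 : g ((x.val : ℤ)) = f ((x.val : ℤ)) := by
        rw [hg]; simp only [if_neg h1, if_neg h2]
      show ((g ((x.val : ℤ)) : ℤ) : ZMod n) = χ x
      rw [h3]
      rw [redMod_cast fper, hval]
    -- counting
    have horb : ∀ a' : ℤ, orbitF n g a' =
        ((Finset.range n).image (fun r => π^[r] ((a' : ZMod n)))).image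
          (fun z : ZMod n => (z.val : ℤ)) := fun a' => orbitF_eq hgper a'
    have hval2inj : Function.Injective (fun z : ZMod n => (z.val : ℤ)) := by
      intro x y h
      have h' : (x.val : ℤ) = (y.val : ℤ) := h
      exact ZMod.val_injective n (Int.natCast_inj.mp h')
    have hcastuniv : (Finset.range n).image (fun a : ℕ => (((a : ℤ)) : ZMod n)) =
        (Finset.univ : Finset (ZMod n)) := by
      apply Finset.eq_univ_of_forall
      intro x
      refine Finset.mem_image.mpr ⟨x.val, Finset.mem_range.mpr (ZMod.val_lt x), ?_⟩
      exact hval x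
    have hrw : (Finset.range n).image (fun a : ℕ => orbitF n g (a : ℤ)) =
        ((Finset.univ : Finset (ZMod n)).image
          (fun x => (Finset.range n).image (fun r => π^[r] x))).image
          (Finset.image (fun z : ZMod n => (z.val : ℤ))) := by
      rw [Finset.image_image]
      rw [← hcastuniv, Finset.image_image]
      apply Finset.image_congr
      intro a' _
      exact horb (a' : ℤ)
    rw [hrw, Finset.card_image_of_injective _ (Finset.image_injective hval2inj)]
    -- apply the two-cycle lemma
    obtain ⟨s, hsn, hs⟩ := hcyc a
    obtain ⟨t, htn, ht⟩ := hcyc b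
    have hst : s ≠ t := by rintro rfl; exact hab (hs.symm.trans ht)
    rcases hst.lt_or_gt with h | h
    · exact aux_two_cycles n χ π hcyc hχinj a b hab hπa hπb hπx s t hs ht h htn
    · exact aux_two_cycles n χ π hcyc hχinj b a hab.symm hπb hπa
        (fun x hxb hxa => hπx x hxa hxb) t s ht hs h hsn
  exact key
end
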